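/- arXiv:1206.1125 — 7 statements merged into one kernel-verified Lean document; each statement's English description precedes it below -/
import Mathlib

section
/- Let M be an A-module with endomorphisms ψ, φ satisfying ψ∘φ = id. The A[ℤ]-linear map from A[ℤ] ⊗_{A[ℕ],φ} M to lim_ψ(M) sending [k] ⊗ m to φᵏ(σ₀(m)) (where the ℤ-action on the limit is by the invertible shift) is injective, with image the A[ℤ]-submodule generated by σ₀(M). -/
/-!
STATEMENT 4: Let `M` be an `A`-module with endomorphisms `ψ, φ` satisfying
`ψ ∘ φ = id`.  The `A[ℤ]`-linear map `A[ℤ] ⊗_{A[ℕ],φ} M → lim_ψ(M)` sending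
`[k] ⊗ m` to `φᵏ(σ₀(m))` (the `ℤ`-action on the limit being by the invertible
shift) is injective, with image the `A[ℤ]`-submodule generated by `σ₀(M)`.

Here `A[ℤ] ⊗_{A[ℕ],φ} M` is realized concretely as the quotient of `ℤ →₀ M` by the
`A[ℕ]`-balancing relations `single (k+1) m - single k (φ m)` (coming from
`[k]·[1] ⊗ m = [k] ⊗ φ(m)`), on which `[k] ⊗ m` is the class of `single k m`.
-/

variable {A : Type*} [CommRing A] {M : Type*} [AddCommGroup M] [Module A M]

/-- `lim_ψ(M)`, as a submodule of `ℕ → M`. -/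
def limMod (A : Type*) [CommRing A] {M : Type*} [AddCommGroup M] [Module A M]
    (ψ : M →ₗ[A] M) : Submodule A (ℕ → M) where
  carrier := {x | ∀ m, ψ (x (m + 1)) = x m}
  add_mem' := by intro a b ha hb m; simp [ha m, hb m]
  zero_mem' := by intro m; simp
  smul_mem' := by intro c x hx m; simp [hx m]

/-- The invertible shift `φ = ψ⁻¹` on `lim_ψ(M)`, making it an `A[ℤ]`-module. -/
def shiftEquiv (ψ : M →ₗ[A] M) : ↥(limMod A ψ) ≃ₗ[A] ↥(limMod A ψ) where
  toFun x := ⟨fun m => x.1 (m + 1), fun m => x.2 (m + 1)⟩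
  invFun x := ⟨fun m => Nat.rec (ψ (x.1 0)) (fun n _ => x.1 n) m, by
    intro m
    cases m with
    | zero => rfl
    | succ n => exact x.2 n⟩
  left_inv := by
    intro x
    apply Subtype.ext
    funext m
    cases m with
    | zero => exact x.2 0
    | succ n => rfl
  right_inv := by
    intro x
    apply Subtype.ext
    funext m
    rfl
  map_add' := by intro x y; apply Subtype.ext; funext m; rfl
  map_smul' := by intro c x; apply Subtype.ext; funext m; rfl

/-- `σ₀ : M → lim_ψ(M)`, `σ₀(x) = (φᵐ(x))ₘ`. -/
def sigma0 (φ ψ : M →ₗ[A] M) (hψφ : ∀ x, ψ (φ x) = x) : M →ₗ[A] ↥(limMod A ψ) where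
  toFun x := ⟨fun m => (φ ^ m : Module.End A M) x, by
    intro m
    show ψ ((φ ^ (m + 1) : Module.End A M) x) = (φ ^ m : Module.End A M) x
    rw [pow_succ', Module.End.mul_apply, hψφ]⟩
  map_add' := by intro x y; apply Subtype.ext; funext m; simp
  map_smul' := by intro c x; apply Subtype.ext; funext m; simp

/-- The `A[ℕ]`-balancing relations in `ℤ →₀ M` defining `A[ℤ] ⊗_{A[ℕ],φ} M`. -/
def relSet (φ : M →ₗ[A] M) : Set (ℤ →₀ M) :=
  {y | ∃ (k : ℤ) (m : M), y = Finsupp.single (k + 1) m - Finsupp.single k (φ m)}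

/-- A concrete model of `A[ℤ] ⊗_{A[ℕ],φ} M`: the quotient of `ℤ →₀ M` by the
balancing relations; `[k] ⊗ m` is the class of `single k m`. -/
def TensorModel (φ : M →ₗ[A] M) :=
  (ℤ →₀ M) ⧸ Submodule.span A (relSet φ)

noncomputable instance (φ : M →ₗ[A] M) : AddCommGroup (TensorModel φ) :=
  inferInstanceAs (AddCommGroup ((ℤ →₀ M) ⧸ Submodule.span A (relSet φ)))

noncomputable instance (φ : M →ₗ[A] M) : Module A (TensorModel φ) :=
  inferInstanceAs (Module A ((ℤ →₀ M) ⧸ Submodule.span A (relSet φ)))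

lemma shift_sigma0 (φ ψ : M →ₗ[A] M) (hψφ : ∀ x, ψ (φ x) = x) (m : M) :
    shiftEquiv ψ (sigma0 φ ψ hψφ m) = sigma0 φ ψ hψφ (φ m) := by
  apply Subtype.ext
  funext j
  show (φ ^ (j + 1) : Module.End A M) m = (φ ^ j : Module.End A M) (φ m)
  rw [pow_succ, Module.End.mul_apply]

/-- The canonical map `A[ℤ] ⊗_{A[ℕ],φ} M → lim_ψ(M)`, `[k] ⊗ m ↦ φᵏ(σ₀(m))`,
where `φᵏ` for `k ∈ ℤ` is the `k`-th power of the invertible shift. -/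
noncomputable def Theta (φ ψ : M →ₗ[A] M) (hψφ : ∀ x, ψ (φ x) = x) :
    TensorModel φ →ₗ[A] ↥(limMod A ψ) :=
  Submodule.liftQ (Submodule.span A (relSet φ))
    (Finsupp.lsum A fun k : ℤ =>
      ((shiftEquiv ψ ^ k : ↥(limMod A ψ) ≃ₗ[A] ↥(limMod A ψ))
          : ↥(limMod A ψ) →ₗ[A] ↥(limMod A ψ)) ∘ₗ sigma0 φ ψ hψφ)
    (by
      rw [Submodule.span_le]
      rintro y ⟨k, m, rfl⟩
      simp only [SetLike.mem_coe, LinearMap.mem_ker, map_sub, Finsupp.lsum_single,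
        LinearMap.coe_comp, Function.comp_apply, LinearEquiv.coe_coe]
      rw [zpow_add_one, sub_eq_zero]
      show (shiftEquiv ψ ^ k) (shiftEquiv ψ (sigma0 φ ψ hψφ m))
        = (shiftEquiv ψ ^ k) (sigma0 φ ψ hψφ (φ m))
      rw [shift_sigma0])

lemma theta_mk_single (φ ψ : M →ₗ[A] M) (hψφ : ∀ x, ψ (φ x) = x) (k : ℤ) (m : M) :
    Theta φ ψ hψφ (Submodule.Quotient.mk (Finsupp.single k m)) =
      (shiftEquiv ψ ^ k) (sigma0 φ ψ hψφ m) := by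
  show (Finsupp.lsum A fun k : ℤ =>
      ((shiftEquiv ψ ^ k : ↥(limMod A ψ) ≃ₗ[A] ↥(limMod A ψ))
          : ↥(limMod A ψ) →ₗ[A] ↥(limMod A ψ)) ∘ₗ sigma0 φ ψ hψφ) (Finsupp.single k m) = _
  rw [Finsupp.lsum_single]
  rfl

lemma push_mem (φ : M →ₗ[A] M) (k : ℤ) (n : ℕ) (m : M) :
    (Finsupp.single (k + n) m - Finsupp.single k ((φ ^ n : Module.End A M) m) : ℤ →₀ M)
      ∈ Submodule.span A (relSet φ) := by
  induction n generalizing m with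
  | zero => simp
  | succ n ih =>
    have h1 : (Finsupp.single (k + n + 1) m - Finsupp.single (k + n) (φ m) : ℤ →₀ M)
        ∈ Submodule.span A (relSet φ) :=
      Submodule.subset_span ⟨k + n, m, rfl⟩
    have h2 := ih (φ m)
    have := Submodule.add_mem _ h1 h2
    have hpow : (φ ^ n : Module.End A M) (φ m) = (φ ^ (n + 1) : Module.End A M) m := by
      rw [pow_succ, Module.End.mul_apply]
    have hk : (k + (n + 1 : ℕ) : ℤ) = k + n + 1 := by push_cast; ring
    rw [hk]
    convert this using 1
    rw [hpow]
    abel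

lemma mk_single_rep (φ : M →ₗ[A] M) (f : ℤ →₀ M) :
    ∃ (N : ℤ) (x : M),
      (Submodule.Quotient.mk f : TensorModel φ) = Submodule.Quotient.mk (Finsupp.single N x) := by
  induction f using Finsupp.induction with
  | zero => exact ⟨0, 0, by simp⟩
  | single_add k m g _ _ ih =>
    obtain ⟨N, x, hx⟩ := ih
    refine ⟨min k N, (φ ^ (k - min k N).toNat : Module.End A M) m
      + (φ ^ (N - min k N).toNat : Module.End A M) x, ?_⟩
    have hk : (min k N) + ((k - min k N).toNat : ℤ) = k := by
      rw [Int.toNat_of_nonneg (by omega)]; ring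
    have hN : (min k N) + ((N - min k N).toNat : ℤ) = N := by
      rw [Int.toNat_of_nonneg (by omega)]; ring
    have e1 : (Submodule.Quotient.mk (Finsupp.single k m) : TensorModel φ)
        = Submodule.Quotient.mk
            (Finsupp.single (min k N) ((φ ^ (k - min k N).toNat : Module.End A M) m)) := by
      rw [Submodule.Quotient.eq]
      have := push_mem φ (min k N) (k - min k N).toNat m
      rwa [hk] at this
    have e2 : (Submodule.Quotient.mk (Finsupp.single N x) : TensorModel φ)
        = Submodule.Quotient.mk
            (Finsupp.single (min k N) ((φ ^ (N - min k N).toNat : Module.End A M) x)) := by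
      rw [Submodule.Quotient.eq]
      have := push_mem φ (min k N) (N - min k N).toNat x
      rwa [hN] at this
    calc (Submodule.Quotient.mk (Finsupp.single k m + g) : TensorModel φ)
        = Submodule.Quotient.mk (Finsupp.single k m)
          + (Submodule.Quotient.mk g : TensorModel φ) := by
          rfl
      _ = _ := by
          rw [e1, hx, e2, ← Submodule.Quotient.mk_add, ← Finsupp.single_add]

/-- **(Prop. 2.6 of the paper.)** The map `[k] ⊗ m ↦ φᵏ(σ₀(m))` from
`A[ℤ] ⊗_{A[ℕ],φ} M` to `lim_ψ(M)` is injective, with image the `A[ℤ]`-submodule of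
`lim_ψ(M)` generated by `σ₀(M)` (the compactly induced representation). -/
theorem theta_injective_range (φ ψ : M →ₗ[A] M) (hψφ : ∀ x, ψ (φ x) = x) :
    Function.Injective (Theta φ ψ hψφ) ∧
    LinearMap.range (Theta φ ψ hψφ) =
      Submodule.span A {y : ↥(limMod A ψ) |
        ∃ (k : ℤ) (m : M), y = (shiftEquiv ψ ^ k) (sigma0 φ ψ hψφ m)} := by
  constructor
  · rw [injective_iff_map_eq_zero]
    intro q hq
    obtain ⟨f, rfl⟩ := Submodule.Quotient.mk_surjective _ q
    obtain ⟨N, x, hx⟩ := mk_single_rep φ f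
    rw [hx, theta_mk_single] at hq
    have hσ : sigma0 φ ψ hψφ x = 0 := by
      have := congrArg (fun y => (shiftEquiv ψ ^ (-N)) y) hq
      simpa [← LinearEquiv.trans_apply, ← zpow_add] using this
    have hx0 : x = 0 := by
      have := congrArg (fun y => y.1 0) hσ
      simpa [sigma0] using this
    rw [hx, hx0]
    simp
    rfl
  · apply le_antisymm
    · rintro y ⟨q, rfl⟩
      obtain ⟨f, rfl⟩ := Submodule.Quotient.mk_surjective _ q
      induction f using Finsupp.induction with
      | zero => exact (congrArg (· ∈ _) (map_zero (Theta φ ψ hψφ))).mpr (Submodule.zero_mem _)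
      | single_add k m g _ _ ih =>
        rw [Submodule.Quotient.mk_add]
        refine (congrArg (· ∈ _) (map_add (Theta φ ψ hψφ)
          (Submodule.Quotient.mk (Finsupp.single k m) : TensorModel φ)
          (Submodule.Quotient.mk g : TensorModel φ))).mpr ?_
        refine Submodule.add_mem _ ?_ ih
        refine (congrArg (· ∈ _) (theta_mk_single φ ψ hψφ k m)).mpr ?_
        exact Submodule.subset_span ⟨k, m, rfl⟩
    · rw [Submodule.span_le]
      rintro y ⟨k, m, rfl⟩
      exact ⟨Submodule.Quotient.mk (Finsupp.single k m), theta_mk_single φ ψ hψφ k m⟩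
end

section
/- Let M be an étale A[P₊]-module. For t₁, t₂ ∈ L₊ the canonical left inverses satisfy ψ_{t₁t₂} = ψ_{t₂} ∘ ψ_{t₁}. Consequently the assignment (ut)⁻¹ ↦ ψₜ ∘ u⁻¹ for t ∈ L₊, u ∈ N₀ defines an action of the inverse monoid P₋ = L₋N₀ on M. -/
open scoped Classical
set_option maxHeartbeats 1000000

/-!
STATEMENT 7: For an étale `A[P₊]`-module `M`, the canonical left inverses satisfy
`ψ_{t₁t₂} = ψ_{t₂} ∘ ψ_{t₁}` for `t₁, t₂ ∈ L₊`.  Consequently the assignment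
`(ut)⁻¹ ↦ ψₜ ∘ u⁻¹` (`t ∈ L₊`, `u ∈ N₀`) defines an action of the inverse monoid
`P₋ = L₋N₀` on `M`.
-/


section AuxExt
variable {A : Type*} [CommRing A] {M : Type*} [AddCommGroup M] [Module A M]

lemma end_ext_of_internal {ι : Type*} [DecidableEq ι] {S : ι → Submodule A M}
    (h : DirectSum.IsInternal S) {f g : Module.End A M}
    (hfg : ∀ i, ∀ m ∈ S i, f m = g m) : f = g := by
  ext m
  have hm : m ∈ (⨆ i, S i) := by rw [h.submodule_iSup_eq_top]; trivial
  refine Submodule.iSup_induction (motive := fun x => f x = g x) S hm hfg (by simp) ?_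
  intro x y hx hy
  simp [map_add, hx, hy]

end AuxExt

variable {P : Type*} [Group P]

/-- The subgroup `N₀ ∩ tN₀t⁻¹` of `N₀`, i.e. those `u ∈ N₀` with `t⁻¹ u t ∈ N₀`. -/
def conjSub (N₀ : Subgroup P) (t : P) : Subgroup ↥N₀ where
  carrier := {u | t⁻¹ * (u : P) * t ∈ N₀}
  one_mem' := by simpa using N₀.one_mem
  mul_mem' := by
    intro a b ha hb
    show t⁻¹ * ((a * b : ↥N₀) : P) * t ∈ N₀
    have h : t⁻¹ * ((a * b : ↥N₀) : P) * t = (t⁻¹ * (a : P) * t) * (t⁻¹ * (b : P) * t) := by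
      push_cast; group
    rw [h]
    exact N₀.mul_mem ha hb
  inv_mem' := by
    intro a ha
    show t⁻¹ * ((a⁻¹ : ↥N₀) : P) * t ∈ N₀
    have h : t⁻¹ * ((a⁻¹ : ↥N₀) : P) * t = (t⁻¹ * (a : P) * t)⁻¹ := by
      push_cast; group
    rw [h]
    exact N₀.inv_mem ha

/-- An `A[P₊]`-module `M` (with `N₀`-action `ρ`) is *étale* at `t` (acting by `φ`)
if `φ` is injective and `M = ⨁_{u ∈ J(N₀/tN₀t⁻¹)} u·φ(M)`. -/
def IsEtaleAt (A : Type*) [CommRing A] (N₀ : Subgroup P) (t : P)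
    {M : Type*} [AddCommGroup M] [Module A M]
    (ρ : ↥N₀ → Module.End A M) (φ : Module.End A M) : Prop :=
  Function.Injective φ ∧
    DirectSum.IsInternal fun c : ↥N₀ ⧸ conjSub N₀ t =>
      LinearMap.range (ρ (Quotient.out c) * φ)

/-- **(Prop. 3.9 of the paper.)** `ψ_{t₁t₂} = ψ_{t₂} ∘ ψ_{t₁}`; consequently
`b⁻¹ = (ut)⁻¹ ↦ ψₜ ∘ u⁻¹` is multiplicative, i.e. defines an action of `P₋` on `M`:
`(ψ_{t₂} ∘ u₂⁻¹) ∘ (ψ_{t₁} ∘ u₁⁻¹) = ψ_{t₁t₂} ∘ (u₁ · t₁u₂t₁⁻¹)⁻¹`. -/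
theorem psi_action (A : Type*) [CommRing A] (N₀ : Subgroup P) (t₁ t₂ : P)
    (hstab₁ : ∀ u : P, u ∈ N₀ → t₁ * u * t₁⁻¹ ∈ N₀)
    (hstab₂ : ∀ u : P, u ∈ N₀ → t₂ * u * t₂⁻¹ ∈ N₀)
    {M : Type*} [AddCommGroup M] [Module A M]
    (ρ : ↥N₀ →* Module.End A M) (φ₁ φ₂ ψ₁ ψ₂ ψ₁₂ : Module.End A M)
    (hcompat₁ : ∀ (u : ↥N₀) (m : M), φ₁ (ρ u m) = ρ ⟨t₁ * u * t₁⁻¹, hstab₁ u u.2⟩ (φ₁ m))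
    (hcompat₂ : ∀ (u : ↥N₀) (m : M), φ₂ (ρ u m) = ρ ⟨t₂ * u * t₂⁻¹, hstab₂ u u.2⟩ (φ₂ m))
    (hetale₁ : IsEtaleAt A N₀ t₁ (fun u => ρ u) φ₁)
    (hetale₂ : IsEtaleAt A N₀ t₂ (fun u => ρ u) φ₂)
    (hetale₁₂ : IsEtaleAt A N₀ (t₁ * t₂) (fun u => ρ u) (φ₁ * φ₂))
    (hψφ₁ : ψ₁ * φ₁ = 1)
    (hvanish₁ : ∀ u : ↥N₀, u ∉ conjSub N₀ t₁ → ∀ m : M, ψ₁ (ρ u (φ₁ m)) = 0)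
    (hψφ₂ : ψ₂ * φ₂ = 1)
    (hvanish₂ : ∀ u : ↥N₀, u ∉ conjSub N₀ t₂ → ∀ m : M, ψ₂ (ρ u (φ₂ m)) = 0)
    (hψφ₁₂ : ψ₁₂ * (φ₁ * φ₂) = 1)
    (hvanish₁₂ : ∀ u : ↥N₀, u ∉ conjSub N₀ (t₁ * t₂) →
      ∀ m : M, ψ₁₂ (ρ u ((φ₁ * φ₂) m)) = 0) :
    ψ₁₂ = ψ₂ * ψ₁ ∧
    ∀ u₁ u₂ : ↥N₀,
      (ψ₂ * ρ u₂⁻¹) * (ψ₁ * ρ u₁⁻¹)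
        = ψ₁₂ * ρ (u₁ * ⟨t₁ * u₂ * t₁⁻¹, hstab₁ u₂ u₂.2⟩)⁻¹ := by
  have hψφ₁' : ∀ m : M, ψ₁ (φ₁ m) = m := fun m => by
    simpa [Module.End.mul_apply] using DFunLike.congr_fun hψφ₁ m
  have hψφ₂' : ∀ m : M, ψ₂ (φ₂ m) = m := fun m => by
    simpa [Module.End.mul_apply] using DFunLike.congr_fun hψφ₂ m
  have hψφ₁₂' : ∀ m : M, ψ₁₂ (φ₁ (φ₂ m)) = m := fun m => by
    simpa [Module.End.mul_apply] using DFunLike.congr_fun hψφ₁₂ m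
  -- Part 1 : ψ₁₂ = ψ₂ * ψ₁
  have h1 : ψ₁₂ = ψ₂ * ψ₁ := by
    refine end_ext_of_internal hetale₁₂.2 ?_
    rintro c m ⟨x, rfl⟩
    set u := Quotient.out c with hu
    simp only [Module.End.mul_apply]
    by_cases h : u ∈ conjSub N₀ (t₁ * t₂)
    · have h' : (t₁ * t₂)⁻¹ * (u : P) * (t₁ * t₂) ∈ N₀ := h
      set v : ↥N₀ := ⟨(t₁ * t₂)⁻¹ * (u : P) * (t₁ * t₂), h'⟩ with hv
      have hw2 : t₂ * (v : P) * t₂⁻¹ ∈ N₀ := hstab₂ _ v.2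
      set w : ↥N₀ := ⟨t₂ * (v : P) * t₂⁻¹, hw2⟩ with hwdef
      have e2 : φ₂ (ρ v x) = ρ w (φ₂ x) := hcompat₂ v x
      have huw : (⟨t₁ * (w : P) * t₁⁻¹, hstab₁ _ w.2⟩ : ↥N₀) = u := by
        apply Subtype.ext
        show t₁ * (t₂ * ((t₁ * t₂)⁻¹ * (u : P) * (t₁ * t₂)) * t₂⁻¹) * t₁⁻¹ = (u : P)
        group
      have e1 : φ₁ (ρ w (φ₂ x)) = ρ u (φ₁ (φ₂ x)) := by rw [hcompat₁ w (φ₂ x), huw]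
      rw [← e1, ← e2, hψφ₁₂', hψφ₁', hψφ₂']
    · have lhs0 : ψ₁₂ (ρ u ((φ₁ * φ₂) x)) = 0 := hvanish₁₂ u h x
      rw [Module.End.mul_apply] at lhs0
      rw [lhs0]
      by_cases h1 : u ∈ conjSub N₀ t₁
      · have h1' : t₁⁻¹ * (u : P) * t₁ ∈ N₀ := h1
        set w : ↥N₀ := ⟨t₁⁻¹ * (u : P) * t₁, h1'⟩ with hwdef
        have huw : (⟨t₁ * (w : P) * t₁⁻¹, hstab₁ _ w.2⟩ : ↥N₀) = u := by
          apply Subtype.ext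
          show t₁ * (t₁⁻¹ * (u : P) * t₁) * t₁⁻¹ = (u : P)
          group
        have e1 : φ₁ (ρ w (φ₂ x)) = ρ u (φ₁ (φ₂ x)) := by rw [hcompat₁ w (φ₂ x), huw]
        have hw2 : w ∉ conjSub N₀ t₂ := by
          intro hw
          apply h
          show (t₁ * t₂)⁻¹ * (u : P) * (t₁ * t₂) ∈ N₀
          have heq : (t₁ * t₂)⁻¹ * (u : P) * (t₁ * t₂)
              = t₂⁻¹ * (t₁⁻¹ * (u : P) * t₁) * t₂ := by group
          rw [heq]
          exact hw
        rw [← e1, hψφ₁']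
        exact (hvanish₂ w hw2 x).symm
      · rw [hvanish₁ u h1 (φ₂ x), map_zero]
  refine ⟨h1, ?_⟩
  -- Commutation : ψ₁ * ρ (t₁ u t₁⁻¹) = ρ u * ψ₁
  have hcomm : ∀ u : ↥N₀,
      ψ₁ * ρ ⟨t₁ * (u : P) * t₁⁻¹, hstab₁ u u.2⟩ = ρ u * ψ₁ := by
    intro u
    set a : ↥N₀ := ⟨t₁ * (u : P) * t₁⁻¹, hstab₁ u u.2⟩ with hadef
    refine end_ext_of_internal hetale₁.2 ?_
    rintro c m ⟨x, rfl⟩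
    set w := Quotient.out c with hw
    simp only [Module.End.mul_apply]
    have hmul : ρ a (ρ w (φ₁ x)) = ρ (a * w) (φ₁ x) := by
      rw [map_mul]; rfl
    rw [hmul]
    by_cases hwm : w ∈ conjSub N₀ t₁
    · have hwm' : t₁⁻¹ * (w : P) * t₁ ∈ N₀ := hwm
      set w' : ↥N₀ := ⟨t₁⁻¹ * (w : P) * t₁, hwm'⟩ with hw'def
      have hww : (⟨t₁ * (w' : P) * t₁⁻¹, hstab₁ _ w'.2⟩ : ↥N₀) = w := by
        apply Subtype.ext
        show t₁ * (t₁⁻¹ * (w : P) * t₁) * t₁⁻¹ = (w : P)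
        group
      have e : φ₁ (ρ w' x) = ρ w (φ₁ x) := by rw [hcompat₁ w' x, hww]
      have harg : (⟨t₁ * ((u * w' : ↥N₀) : P) * t₁⁻¹, hstab₁ _ (u * w').2⟩ : ↥N₀)
          = a * w := by
        apply Subtype.ext
        show t₁ * ((u : P) * (t₁⁻¹ * (w : P) * t₁)) * t₁⁻¹
          = (t₁ * (u : P) * t₁⁻¹) * (w : P)
        group
      have e2 : φ₁ (ρ (u * w') x) = ρ (a * w) (φ₁ x) := by
        rw [hcompat₁ (u * w') x, harg]
      rw [← e2, hψφ₁', ← e, hψφ₁', map_mul]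
      rfl
    · have haw : a * w ∉ conjSub N₀ t₁ := by
        intro hmem
        apply hwm
        show t₁⁻¹ * (w : P) * t₁ ∈ N₀
        have hmem' : t₁⁻¹ * ((a * w : ↥N₀) : P) * t₁ ∈ N₀ := hmem
        have hc : ((a * w : ↥N₀) : P) = (t₁ * (u : P) * t₁⁻¹) * (w : P) := by
          push_cast; rfl
        rw [hc] at hmem'
        have heq : t₁⁻¹ * (w : P) * t₁
            = ((u : P))⁻¹ * (t₁⁻¹ * ((t₁ * (u : P) * t₁⁻¹) * (w : P)) * t₁) := by group
        rw [heq]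
        exact N₀.mul_mem (N₀.inv_mem u.2) hmem'
      rw [hvanish₁ _ haw x, hvanish₁ w hwm x, map_zero]
  intro u₁ u₂
  have hassoc : (ψ₂ * ρ u₂⁻¹) * (ψ₁ * ρ u₁⁻¹)
      = ψ₂ * ((ρ u₂⁻¹ * ψ₁) * ρ u₁⁻¹) := by noncomm_ring
  have hsinv : (⟨t₁ * (u₂ : P) * t₁⁻¹, hstab₁ u₂ u₂.2⟩ : ↥N₀)⁻¹
      = ⟨t₁ * ((u₂⁻¹ : ↥N₀) : P) * t₁⁻¹, hstab₁ _ (u₂⁻¹).2⟩ := by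
    apply Subtype.ext
    push_cast
    group
  rw [hassoc, ← hcomm u₂⁻¹, h1, mul_inv_rev, hsinv, map_mul]
  noncomm_ring
end

section
/- Let f : M → M' be an A-linear and N₀-equivariant map between two étale A[P₊]-modules. Then for each t ∈ L₊, f commutes with φₜ if and only if f commutes with the canonical left inverse ψₜ. -/
open scoped Classical

/-!
STATEMENT 8: Let `f : M → M'` be an `A`-linear, `N₀`-equivariant map between two
étale `A[P₊]`-modules.  Then for each `t ∈ L₊`, `f` commutes with `φₜ` if and only
if `f` commutes with the canonical left inverse `ψₜ`.
-/

variable {P : Type*} [Group P]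

section Aux

variable {A : Type*} [CommRing A] {N₀ : Subgroup P} {t : P}

/-- `ρ v ∘ φ = φ ∘ ρ (t⁻¹ v t)` when `v ∈ conjSub N₀ t`. -/
private lemma conj_phi {M : Type*} [AddCommGroup M] [Module A M]
    (ρ : ↥N₀ →* Module.End A M) (φ : Module.End A M) (hstab : ∀ u : P, u ∈ N₀ → t * u * t⁻¹ ∈ N₀)
    (hcompat : ∀ (u : ↥N₀) (m : M), φ (ρ u m) = ρ ⟨t * u * t⁻¹, hstab u u.2⟩ (φ m))
    (v : ↥N₀) (hv : v ∈ conjSub N₀ t) (m : M) :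
    ρ v (φ m) = φ (ρ ⟨t⁻¹ * ↑v * t, hv⟩ m) := by
  have h := hcompat ⟨t⁻¹ * ↑v * t, hv⟩ m
  have he : (⟨t * (t⁻¹ * ↑v * t) * t⁻¹, hstab _ hv⟩ : ↥N₀) = v := by
    ext; group
  rw [h, he]

private lemma psi_conj {M : Type*} [AddCommGroup M] [Module A M]
    (ρ : ↥N₀ →* Module.End A M) (φ ψ : Module.End A M)
    (hstab : ∀ u : P, u ∈ N₀ → t * u * t⁻¹ ∈ N₀)
    (hcompat : ∀ (u : ↥N₀) (m : M), φ (ρ u m) = ρ ⟨t * u * t⁻¹, hstab u u.2⟩ (φ m))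
    (hψφ : ψ * φ = 1)
    (v : ↥N₀) (hv : v ∈ conjSub N₀ t) (m : M) :
    ψ (ρ v (φ m)) = ρ ⟨t⁻¹ * ↑v * t, hv⟩ m := by
  rw [conj_phi ρ φ hstab hcompat v hv m]
  have := DFunLike.congr_fun hψφ (ρ ⟨t⁻¹ * ↑v * t, hv⟩ m)
  simpa using this

/-- If all `ψ (ρ v x)` vanish on an étale module, then `x = 0`. -/
private lemma vanish_of_psi_vanish {M : Type*} [AddCommGroup M] [Module A M]
    (ρ : ↥N₀ →* Module.End A M) (φ ψ : Module.End A M)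
    (hetale : IsEtaleAt A N₀ t (fun u => ρ u) φ)
    (hψφ : ψ * φ = 1)
    (hvanish : ∀ u : ↥N₀, u ∉ conjSub N₀ t → ∀ m : M, ψ (ρ u (φ m)) = 0)
    (x : M) (hx : ∀ v : ↥N₀, ψ (ρ v x) = 0) : x = 0 := by
  have htop := hetale.2.submodule_iSup_eq_top
  have hxmem : x ∈ ⨆ c : ↥N₀ ⧸ conjSub N₀ t,
      LinearMap.range ((fun u => ρ u) (Quotient.out c) * φ) := htop ▸ Submodule.mem_top
  obtain ⟨g, hg, hsum⟩ := (Submodule.mem_iSup_iff_exists_finsupp _ _).mp hxmem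
  rw [← hsum, Finsupp.sum]
  refine Finset.sum_eq_zero fun c hc => ?_
  obtain ⟨m, hm⟩ := hg c
  have hkey : ψ (ρ (Quotient.out c)⁻¹ x) = m := by
    rw [← hsum, Finsupp.sum, map_sum (ρ (Quotient.out c)⁻¹ : Module.End A M), map_sum ψ]
    rw [Finset.sum_eq_single_of_mem c hc]
    · rw [← hm]
      simp only [Module.End.mul_apply]
      rw [← Module.End.mul_apply (ρ (Quotient.out c)⁻¹) (ρ (Quotient.out c)),
        ← map_mul, inv_mul_cancel, map_one]
      simpa using DFunLike.congr_fun hψφ m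
    · intro d _ hdc
      obtain ⟨md, hmd⟩ := hg d
      rw [← hmd]
      simp only [Module.End.mul_apply]
      rw [← Module.End.mul_apply (ρ (Quotient.out c)⁻¹) (ρ (Quotient.out d)), ← map_mul]
      apply hvanish
      intro hmem
      apply hdc
      have heq : (⟦Quotient.out d⟧ : ↥N₀ ⧸ conjSub N₀ t) = ⟦Quotient.out c⟧ :=
        (Quotient.sound ((QuotientGroup.leftRel_apply).mpr
          hmem)).symm
      calc d = ⟦Quotient.out d⟧ := (Quotient.out_eq d).symm
        _ = ⟦Quotient.out c⟧ := heq
        _ = c := Quotient.out_eq c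
  have hm0 : m = 0 := by rw [← hkey, hx]
  rw [← hm, hm0]
  simp

end Aux

/-- **(Lemma 3.8 of the paper.)** An `N₀`-equivariant `A`-linear map between étale
`A[P₊]`-modules commutes with `φₜ` iff it commutes with `ψₜ`. -/
theorem equivariance_phi_iff_psi (A : Type*) [CommRing A] (N₀ : Subgroup P) (t : P)
    (hstab : ∀ u : P, u ∈ N₀ → t * u * t⁻¹ ∈ N₀)
    {M M' : Type*} [AddCommGroup M] [Module A M] [AddCommGroup M'] [Module A M']
    (ρ : ↥N₀ →* Module.End A M) (ρ' : ↥N₀ →* Module.End A M')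
    (φ ψ : Module.End A M) (φ' ψ' : Module.End A M')
    (hcompat : ∀ (u : ↥N₀) (m : M), φ (ρ u m) = ρ ⟨t * u * t⁻¹, hstab u u.2⟩ (φ m))
    (hcompat' : ∀ (u : ↥N₀) (m : M'), φ' (ρ' u m) = ρ' ⟨t * u * t⁻¹, hstab u u.2⟩ (φ' m))
    (hetale : IsEtaleAt A N₀ t (fun u => ρ u) φ)
    (hetale' : IsEtaleAt A N₀ t (fun u => ρ' u) φ')
    (hψφ : ψ * φ = 1)
    (hvanish : ∀ u : ↥N₀, u ∉ conjSub N₀ t → ∀ m : M, ψ (ρ u (φ m)) = 0)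
    (hψφ' : ψ' * φ' = 1)
    (hvanish' : ∀ u : ↥N₀, u ∉ conjSub N₀ t → ∀ m : M', ψ' (ρ' u (φ' m)) = 0)
    (f : M →ₗ[A] M')
    (hfN : ∀ u : ↥N₀, f ∘ₗ (ρ u : M →ₗ[A] M) = (ρ' u : M' →ₗ[A] M') ∘ₗ f) :
    f ∘ₗ (φ : M →ₗ[A] M) = (φ' : M' →ₗ[A] M') ∘ₗ f ↔
      f ∘ₗ (ψ : M →ₗ[A] M) = (ψ' : M' →ₗ[A] M') ∘ₗ f := by
  have hfN' : ∀ (u : ↥N₀) (m : M), f (ρ u m) = ρ' u (f m) := fun u m =>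
    DFunLike.congr_fun (hfN u) m
  constructor
  · -- φ-equivariance implies ψ-equivariance
    intro hφ
    have hφ' : ∀ m : M, f (φ m) = φ' (f m) := fun m => DFunLike.congr_fun hφ m
    -- the two maps agree on each generator ρ u (φ m)
    have hgen : ∀ (u : ↥N₀) (m : M), f (ψ (ρ u (φ m))) = ψ' (f (ρ u (φ m))) := by
      intro u m
      have hrhs : f (ρ u (φ m)) = ρ' u (φ' (f m)) := by rw [hfN', hφ']
      by_cases hu : u ∈ conjSub N₀ t
      · rw [psi_conj ρ φ ψ hstab hcompat hψφ u hu m, hrhs,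
          psi_conj ρ' φ' ψ' hstab hcompat' hψφ' u hu (f m), hfN']
      · rw [hvanish u hu m, hrhs, hvanish' u hu (f m), map_zero]
    ext m
    have htop := hetale.2.submodule_iSup_eq_top
    have hmem : m ∈ ⨆ c : ↥N₀ ⧸ conjSub N₀ t,
        LinearMap.range ((fun u => ρ u) (Quotient.out c) * φ) := htop ▸ Submodule.mem_top
    simp only [LinearMap.coe_comp, Function.comp_apply]
    refine Submodule.iSup_induction (motive := fun y => f (ψ y) = ψ' (f y)) _ hmem ?_ ?_ ?_
    · rintro c y ⟨z, rfl⟩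
      exact hgen _ z
    · simp
    · intro y z hy hz
      simp [map_add, hy, hz]
  · -- ψ-equivariance implies φ-equivariance
    intro hψ
    have hψ' : ∀ m : M, f (ψ m) = ψ' (f m) := fun m => DFunLike.congr_fun hψ m
    ext m
    simp only [LinearMap.coe_comp, Function.comp_apply]
    have hzero : f (φ m) - φ' (f m) = 0 := by
      apply vanish_of_psi_vanish ρ' φ' ψ' hetale' hψφ' hvanish'
      intro v
      rw [map_sub, map_sub]
      by_cases hv : v ∈ conjSub N₀ t
      · rw [← hfN', ← hψ',
          psi_conj ρ φ ψ hstab hcompat hψφ v hv m,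
          psi_conj ρ' φ' ψ' hstab hcompat' hψφ' v hv (f m), hfN', sub_self]
      · rw [← hfN', ← hψ', hvanish v hv m, hvanish' v hv (f m), map_zero, sub_self]
    exact sub_eq_zero.mp hzero
end

section
/- The category of étale A[P₊]-modules is abelian: the kernel and cokernel of any morphism between étale A[P₊]-modules are again étale. -/
open scoped Classical

/-!
STATEMENT 9: The category of étale `A[P₊]`-modules is abelian: the kernel and the
cokernel of any morphism between étale `A[P₊]`-modules are again étale (with the
induced actions of `N₀` and of the monoid `L₊`).
-/

variable {P : Type*} [Group P]

open scoped DirectSum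

namespace EtaleAux

variable (A : Type*) [CommRing A] {ι : Type*} [dec : DecidableEq ι]
variable {β₁ β₂ β₃ : ι → Type*}
  [∀ i, AddCommGroup (β₁ i)] [∀ i, Module A (β₁ i)]
  [∀ i, AddCommGroup (β₂ i)] [∀ i, Module A (β₂ i)]
  [∀ i, AddCommGroup (β₃ i)] [∀ i, Module A (β₃ i)]

/-- The componentwise map of direct sums. -/
def dmap (h : ∀ i, β₁ i →ₗ[A] β₂ i) : (⨁ i, β₁ i) →ₗ[A] ⨁ i, β₂ i :=
  DirectSum.toModule A ι _ fun i => (DirectSum.lof A ι β₂ i) ∘ₗ h i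

@[simp] lemma dmap_lof (h : ∀ i, β₁ i →ₗ[A] β₂ i) (i : ι) (x : β₁ i) :
    dmap A h (DirectSum.lof A ι β₁ i x) = DirectSum.lof A ι β₂ i (h i x) := by
  simp [dmap, DirectSum.toModule_lof]

lemma dmap_apply (h : ∀ i, β₁ i →ₗ[A] β₂ i) (x : ⨁ i, β₁ i) (j : ι) :
    dmap A h x j = h j (x j) := by
  induction x using DirectSum.induction_on with
  | zero => simp
  | of i b =>
    rw [← DirectSum.lof_eq_of A, dmap_lof]
    rcases eq_or_ne i j with rfl | hij
    · rw [DirectSum.lof_eq_of, DirectSum.of_eq_same, DirectSum.lof_eq_of, DirectSum.of_eq_same]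
    · rw [DirectSum.lof_eq_of, DirectSum.of_eq_of_ne _ _ _ hij.symm,
        DirectSum.lof_eq_of, DirectSum.of_eq_of_ne _ _ _ hij.symm, map_zero]
  | add x y hx hy => rw [map_add, DirectSum.add_apply, DirectSum.add_apply, hx, hy, map_add]

lemma dmap_comp (h₂ : ∀ i, β₂ i →ₗ[A] β₃ i) (h₁ : ∀ i, β₁ i →ₗ[A] β₂ i) :
    dmap A h₂ ∘ₗ dmap A h₁ = dmap A fun i => h₂ i ∘ₗ h₁ i := by
  refine DirectSum.linearMap_ext A fun i => ?_
  ext x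
  simp

lemma dmap_id : dmap A (fun i => (LinearMap.id : β₁ i →ₗ[A] β₁ i)) = LinearMap.id := by
  refine DirectSum.linearMap_ext A fun i => ?_
  ext x
  simp

lemma dmap_bijective (e : ∀ i, β₁ i ≃ₗ[A] β₂ i) :
    Function.Bijective (dmap A fun i => (e i : β₁ i →ₗ[A] β₂ i)) := by
  refine Function.bijective_iff_has_inverse.mpr
    ⟨dmap A fun i => ((e i).symm : β₂ i →ₗ[A] β₁ i), fun x => ?_, fun x => ?_⟩
  · have := LinearMap.congr_fun ((dmap_comp A (fun i => ((e i).symm : β₂ i →ₗ[A] β₁ i))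
      (fun i => (e i : β₁ i →ₗ[A] β₂ i)))) x
    simp only [LinearMap.comp_apply] at this
    rw [this]
    have h2 : (fun i => ((e i).symm : β₂ i →ₗ[A] β₁ i) ∘ₗ (e i : β₁ i →ₗ[A] β₂ i)) =
        fun i => (LinearMap.id : β₁ i →ₗ[A] β₁ i) := by
      funext i; ext m; simp
    rw [h2, dmap_id]; rfl
  · have := LinearMap.congr_fun ((dmap_comp A (fun i => (e i : β₁ i →ₗ[A] β₂ i))
      (fun i => ((e i).symm : β₂ i →ₗ[A] β₁ i)))) x
    simp only [LinearMap.comp_apply] at this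
    rw [this]
    have h2 : (fun i => (e i : β₁ i →ₗ[A] β₂ i) ∘ₗ ((e i).symm : β₂ i →ₗ[A] β₁ i)) =
        fun i => (LinearMap.id : β₂ i →ₗ[A] β₂ i) := by
      funext i; ext m; simp
    rw [h2, dmap_id]; rfl

lemma dmap_injective (h : ∀ i, β₁ i →ₗ[A] β₂ i) (hh : ∀ i, Function.Injective (h i)) :
    Function.Injective (dmap A h) := by
  intro x y hxy
  refine DFinsupp.ext fun j => ?_
  exact hh j (by rw [← dmap_apply, ← dmap_apply, hxy])

section
variable {M : Type*} [AddCommGroup M] [Module A M]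

lemma toModule_factor (g : ι → Module.End A M) (hg : ∀ i, Function.Injective (g i)) :
    (DirectSum.toModule A ι M fun i => (g i : M →ₗ[A] M)) =
      (DirectSum.coeLinearMap fun i => LinearMap.range (g i)) ∘ₗ
        dmap A (fun i => ((LinearEquiv.ofInjective (g i : M →ₗ[A] M) (hg i)) :
          M →ₗ[A] LinearMap.range (g i))) := by
  refine DirectSum.linearMap_ext A fun i => ?_
  ext x
  simp only [LinearMap.comp_apply]
  rw [DirectSum.toModule_lof, dmap_lof, DirectSum.lof_eq_of, DirectSum.coeLinearMap_of]
  simp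

lemma bijective_toModule_iff (g : ι → Module.End A M) (hg : ∀ i, Function.Injective (g i)) :
    Function.Bijective (DirectSum.toModule A ι M fun i => (g i : M →ₗ[A] M)) ↔
      DirectSum.IsInternal fun i => LinearMap.range (g i) := by
  rw [toModule_factor A g hg]
  have hd : Function.Bijective (dmap A (fun i =>
      ((LinearEquiv.ofInjective (g i : M →ₗ[A] M) (hg i)) : M →ₗ[A] LinearMap.range (g i)))) :=
    dmap_bijective A _
  rw [LinearMap.coe_comp]
  exact (Function.Bijective.of_comp_iff _ hd)

lemma toModule_comp_lof_injective (g : ι → (M →ₗ[A] M))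
    (hbij : Function.Bijective (DirectSum.toModule A ι M g)) (i : ι) :
    Function.Injective (g i) := by
  intro x y hxy
  have h1 : DirectSum.toModule A ι M g (DirectSum.lof A ι (fun _ => M) i x) =
      DirectSum.toModule A ι M g (DirectSum.lof A ι (fun _ => M) i y) := by
    rw [DirectSum.toModule_lof, DirectSum.toModule_lof, hxy]
  exact DirectSum.of_injective (β := fun _ : ι => M) i (hbij.injective h1)

end

end EtaleAux

lemma internal_indep {ι : Type*} {M S : Type*} [AddCommMonoid M] [SetLike S M]
    [AddSubmonoidClass S M] {d1 d2 : DecidableEq ι} {p : ι → S}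
    (h : @DirectSum.IsInternal ι M S d1 _ _ _ p) :
    @DirectSum.IsInternal ι M S d2 _ _ _ p := by
  rwa [Subsingleton.elim d2 d1]

lemma bij_of_grouphom {A : Type*} [CommRing A] {M : Type*} [AddCommGroup M] [Module A M]
    {G : Type*} [Group G] (ρ : G →* Module.End A M) (u : G) :
    Function.Bijective (ρ u) := by
  have h1 : ρ u⁻¹ * ρ u = 1 := by rw [← map_mul, inv_mul_cancel, map_one]
  have h2 : ρ u * ρ u⁻¹ = 1 := by rw [← map_mul, mul_inv_cancel, map_one]
  exact Function.bijective_iff_has_inverse.mpr ⟨ρ u⁻¹,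
    fun m => by rw [← Module.End.mul_apply, h1, Module.End.one_apply],
    fun m => by rw [← Module.End.mul_apply, h2, Module.End.one_apply]⟩


lemma isEtaleAt_iff (A : Type*) [CommRing A] (N₀ : Subgroup P) (t : P)
    {M : Type*} [AddCommGroup M] [Module A M]
    (ρ : ↥N₀ → Module.End A M) (hρ : ∀ u, Function.Bijective (ρ u)) (φ : Module.End A M)
    (dec : DecidableEq (↥N₀ ⧸ conjSub N₀ t)) :
    IsEtaleAt A N₀ t ρ φ ↔
      Function.Bijective (@DirectSum.toModule A _ (↥N₀ ⧸ conjSub N₀ t)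
        (fun _ => M) _ _ dec M _ _
        fun c => (ρ (Quotient.out c) * φ : M →ₗ[A] M)) := by
  constructor
  · intro h
    obtain ⟨hinj, hint⟩ := h
    have hg : ∀ c : ↥N₀ ⧸ conjSub N₀ t, Function.Injective ⇑(ρ (Quotient.out c) * φ) := by
      intro c
      have : ⇑(ρ (Quotient.out c) * φ) = ⇑(ρ (Quotient.out c)) ∘ ⇑φ := rfl
      rw [this]
      exact (hρ _).injective.comp hinj
    exact (EtaleAux.bijective_toModule_iff (dec := dec) A
      (fun c => ρ (Quotient.out c) * φ) hg).mpr (internal_indep hint)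
  · intro hbij
    have hginj : ∀ c, Function.Injective (ρ (Quotient.out c) * φ : Module.End A M) :=
      fun c => EtaleAux.toModule_comp_lof_injective (dec := dec) A _ hbij c
    refine ⟨?_, internal_indep ((EtaleAux.bijective_toModule_iff (dec := dec) A _ hginj).mp hbij)⟩
    intro x y hxy
    refine hginj (Quotient.mk'' 1) ?_
    show ρ _ (φ x) = ρ _ (φ y)
    rw [hxy]


/-- **(Prop. 3.10 of the paper.)**  For a morphism `f : M → M'` of étale
`A[P₊]`-modules (equivariant for `N₀` and for every `t` in the submonoid `L₊`),
the kernel `ker f` with the restricted actions and the cokernel `M' ⧸ range f`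
with the induced actions are again étale `A[P₊]`-modules. -/
theorem ker_coker_etale (A : Type*) [CommRing A] (N₀ : Subgroup P) (Lp : Submonoid P)
    (hconj : ∀ t ∈ Lp, ∀ u ∈ N₀, t * u * t⁻¹ ∈ N₀)
    {M M' : Type*} [AddCommGroup M] [Module A M] [AddCommGroup M'] [Module A M']
    (ρ : ↥N₀ →* Module.End A M) (ρ' : ↥N₀ →* Module.End A M')
    (Φ : ↥Lp →* Module.End A M) (Φ' : ↥Lp →* Module.End A M')
    (hcompat : ∀ (t : ↥Lp) (u : ↥N₀) (m : M),
      Φ t (ρ u m) = ρ ⟨(t : P) * u * (t : P)⁻¹, hconj t t.2 u u.2⟩ (Φ t m))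
    (hcompat' : ∀ (t : ↥Lp) (u : ↥N₀) (m : M'),
      Φ' t (ρ' u m) = ρ' ⟨(t : P) * u * (t : P)⁻¹, hconj t t.2 u u.2⟩ (Φ' t m))
    (hetale : ∀ t : ↥Lp, IsEtaleAt A N₀ (t : P) (fun u => ρ u) (Φ t))
    (hetale' : ∀ t : ↥Lp, IsEtaleAt A N₀ (t : P) (fun u => ρ' u) (Φ' t))
    (f : M →ₗ[A] M')
    (hfN : ∀ u : ↥N₀, f ∘ₗ (ρ u : M →ₗ[A] M) = (ρ' u : M' →ₗ[A] M') ∘ₗ f)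
    (hfL : ∀ t : ↥Lp, f ∘ₗ (Φ t : M →ₗ[A] M) = (Φ' t : M' →ₗ[A] M') ∘ₗ f)
    -- stability of the kernel and the image (consequences of equivariance):
    (hkρ : ∀ u : ↥N₀, ∀ x ∈ LinearMap.ker f, ρ u x ∈ LinearMap.ker f)
    (hkΦ : ∀ t : ↥Lp, ∀ x ∈ LinearMap.ker f, Φ t x ∈ LinearMap.ker f)
    (hcρ : ∀ u : ↥N₀, LinearMap.range f ≤ (LinearMap.range f).comap (ρ' u : M' →ₗ[A] M'))
    (hcΦ : ∀ t : ↥Lp, LinearMap.range f ≤ (LinearMap.range f).comap (Φ' t : M' →ₗ[A] M')) :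
    (∀ t : ↥Lp, IsEtaleAt A N₀ (t : P)
        (fun u : ↥N₀ => ((ρ u : M →ₗ[A] M).restrict (hkρ u) :
          Module.End A ↥(LinearMap.ker f)))
        ((Φ t : M →ₗ[A] M).restrict (hkΦ t))) ∧
    (∀ t : ↥Lp, IsEtaleAt A N₀ (t : P)
        (fun u : ↥N₀ => (Submodule.mapQ (LinearMap.range f) (LinearMap.range f)
          (ρ' u : M' →ₗ[A] M') (hcρ u) :
            Module.End A (M' ⧸ LinearMap.range f)))
        (Submodule.mapQ (LinearMap.range f) (LinearMap.range f)
          (Φ' t : M' →ₗ[A] M') (hcΦ t))) := by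
  classical
  have hfNp : ∀ (u : ↥N₀) (m : M), f (ρ u m) = ρ' u (f m) := fun u m => by
    simpa using LinearMap.congr_fun (hfN u) m
  have hfLp : ∀ (t : ↥Lp) (m : M), f (Φ t m) = Φ' t (f m) := fun t m => by
    simpa using LinearMap.congr_fun (hfL t) m
  have hρbij : ∀ u : ↥N₀, Function.Bijective (ρ u) := bij_of_grouphom ρ
  have hρ'bij : ∀ u : ↥N₀, Function.Bijective (ρ' u) := bij_of_grouphom ρ'
  have hρinv : ∀ (u : ↥N₀) (m : M), ρ u⁻¹ (ρ u m) = m := fun u m => by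
    rw [← Module.End.mul_apply, ← map_mul, inv_mul_cancel, map_one, Module.End.one_apply]
  have hρ'inv : ∀ (u : ↥N₀) (m : M'), ρ' u⁻¹ (ρ' u m) = m := fun u m => by
    rw [← Module.End.mul_apply, ← map_mul, inv_mul_cancel, map_one, Module.End.one_apply]
  have hρ'inv' : ∀ (u : ↥N₀) (m : M'), ρ' u (ρ' u⁻¹ m) = m := fun u m => by
    rw [← Module.End.mul_apply, ← map_mul, mul_inv_cancel, map_one, Module.End.one_apply]
  constructor
  · -- the kernel
    intro t
    have dec : DecidableEq (↥N₀ ⧸ conjSub N₀ (t : P)) := Classical.decEq _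
    set ι := ↥N₀ ⧸ conjSub N₀ (t : P) with hι
    set K := LinearMap.ker f with hK
    set T := @DirectSum.toModule A _ ι (fun _ => M) _ _ dec M _ _
      (fun c => (ρ (Quotient.out c) * Φ t : M →ₗ[A] M)) with hT
    set T' := @DirectSum.toModule A _ ι (fun _ => M') _ _ dec M' _ _
      (fun c => (ρ' (Quotient.out c) * Φ' t : M' →ₗ[A] M')) with hT'
    have hTbij : Function.Bijective T :=
      (isEtaleAt_iff A N₀ (t : P) (fun u => ρ u) hρbij (Φ t) dec).mp (hetale t)
    have hT'bij : Function.Bijective T' :=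
      (isEtaleAt_iff A N₀ (t : P) (fun u => ρ' u) hρ'bij (Φ' t) dec).mp (hetale' t)
    have square2 : f ∘ₗ T = T' ∘ₗ EtaleAux.dmap (dec := dec) A (fun _ : ι => f) := by
      refine DirectSum.linearMap_ext A fun c => ?_
      ext x
      simp only [LinearMap.comp_apply, hT, hT', DirectSum.toModule_lof, EtaleAux.dmap_lof,
        Module.End.mul_apply]
      rw [hfNp, hfLp]
    have hρKbij : ∀ u : ↥N₀,
        Function.Bijective ((ρ u : M →ₗ[A] M).restrict (hkρ u)) := by
      intro u
      refine Function.bijective_iff_has_inverse.mpr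
        ⟨(ρ u⁻¹ : M →ₗ[A] M).restrict (hkρ u⁻¹), fun x => ?_, fun x => ?_⟩
      · refine Subtype.ext ?_
        rw [LinearMap.restrict_coe_apply, LinearMap.restrict_coe_apply]
        exact hρinv u x
      · refine Subtype.ext ?_
        rw [LinearMap.restrict_coe_apply, LinearMap.restrict_coe_apply,
          ← Module.End.mul_apply, ← map_mul, mul_inv_cancel, map_one, Module.End.one_apply]
    rw [isEtaleAt_iff A N₀ (t : P) _ hρKbij _ dec]
    set TK := @DirectSum.toModule A _ ι (fun _ => ↥K) _ _ dec ↥K _ _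
      (fun c => (((ρ (Quotient.out c) : M →ₗ[A] M).restrict (hkρ _) *
        (Φ t : M →ₗ[A] M).restrict (hkΦ t) : Module.End A ↥K) : ↥K →ₗ[A] ↥K)) with hTK
    have square1 : K.subtype ∘ₗ TK =
        T ∘ₗ EtaleAux.dmap (dec := dec) A (fun _ : ι => K.subtype) := by
      refine DirectSum.linearMap_ext A fun c => ?_
      ext x
      simp only [LinearMap.comp_apply, hTK, hT, DirectSum.toModule_lof, EtaleAux.dmap_lof,
        Module.End.mul_apply, Submodule.coe_subtype, LinearMap.restrict_coe_apply]
    have square1p : ∀ z, (↑(TK z) : M) =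
        T (EtaleAux.dmap (dec := dec) A (fun _ : ι => K.subtype) z) :=
      fun z => LinearMap.congr_fun square1 z
    constructor
    · intro x y hxy
      have h1 : T (EtaleAux.dmap (dec := dec) A (fun _ : ι => K.subtype) x) =
          T (EtaleAux.dmap (dec := dec) A (fun _ : ι => K.subtype) y) := by
        rw [← square1p, ← square1p, hxy]
      exact EtaleAux.dmap_injective (dec := dec) A _ (fun _ => Subtype.val_injective)
        (hTbij.injective h1)
    · intro m
      obtain ⟨x, hx⟩ := hTbij.surjective (↑m : M)
      have hz : EtaleAux.dmap (dec := dec) A (fun _ : ι => f) x = 0 := by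
        refine hT'bij.injective ?_
        rw [map_zero, ← LinearMap.comp_apply, ← square2, LinearMap.comp_apply, hx]
        exact m.2
      have hcomp : ∀ c : ι, f (x c) = 0 := fun c => by
        have := congrArg (fun w => w c) hz
        simpa [EtaleAux.dmap_apply] using this
      set xK : ⨁ _ : ι, ↥K :=
        DFinsupp.mk x.support (fun c => ⟨x c.1, LinearMap.mem_ker.mpr (hcomp c.1)⟩) with hxK
      have hmap : EtaleAux.dmap (dec := dec) A (fun _ : ι => K.subtype) xK = x := by
        refine DFinsupp.ext fun c => ?_
        rw [EtaleAux.dmap_apply]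
        by_cases hc : c ∈ x.support
        · rw [hxK, DFinsupp.mk_apply, dif_pos hc]
          rfl
        · rw [hxK, DFinsupp.mk_apply, dif_neg hc, map_zero]
          exact (DFinsupp.notMem_support_iff.mp hc).symm
      refine ⟨xK, Subtype.val_injective ?_⟩
      rw [square1p, hmap, hx]
  · -- the cokernel
    intro t
    have dec : DecidableEq (↥N₀ ⧸ conjSub N₀ (t : P)) := Classical.decEq _
    set ι := ↥N₀ ⧸ conjSub N₀ (t : P) with hι
    set r := LinearMap.range f with hr
    set π := r.mkQ with hπ
    set T := @DirectSum.toModule A _ ι (fun _ => M) _ _ dec M _ _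
      (fun c => (ρ (Quotient.out c) * Φ t : M →ₗ[A] M)) with hT
    set T' := @DirectSum.toModule A _ ι (fun _ => M') _ _ dec M' _ _
      (fun c => (ρ' (Quotient.out c) * Φ' t : M' →ₗ[A] M')) with hT'
    have hTbij : Function.Bijective T :=
      (isEtaleAt_iff A N₀ (t : P) (fun u => ρ u) hρbij (Φ t) dec).mp (hetale t)
    have hT'bij : Function.Bijective T' :=
      (isEtaleAt_iff A N₀ (t : P) (fun u => ρ' u) hρ'bij (Φ' t) dec).mp (hetale' t)
    have square2 : f ∘ₗ T = T' ∘ₗ EtaleAux.dmap (dec := dec) A (fun _ : ι => f) := by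
      refine DirectSum.linearMap_ext A fun c => ?_
      ext x
      simp only [LinearMap.comp_apply, hT, hT', DirectSum.toModule_lof, EtaleAux.dmap_lof,
        Module.End.mul_apply]
      rw [hfNp, hfLp]
    have hρQbij : ∀ u : ↥N₀,
        Function.Bijective (Submodule.mapQ r r (ρ' u : M' →ₗ[A] M') (hcρ u)) := by
      intro u
      refine Function.bijective_iff_has_inverse.mpr
        ⟨Submodule.mapQ r r (ρ' u⁻¹ : M' →ₗ[A] M') (hcρ u⁻¹), fun q => ?_, fun q => ?_⟩
      · obtain ⟨m', rfl⟩ := r.mkQ_surjective q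
        rw [Submodule.mkQ_apply, Submodule.mapQ_apply, Submodule.mapQ_apply, hρ'inv]
      · obtain ⟨m', rfl⟩ := r.mkQ_surjective q
        rw [Submodule.mkQ_apply, Submodule.mapQ_apply, Submodule.mapQ_apply, hρ'inv']
    rw [isEtaleAt_iff A N₀ (t : P) _ hρQbij _ dec]
    set TQ := @DirectSum.toModule A _ ι (fun _ => M' ⧸ r) _ _ dec (M' ⧸ r) _ _
      (fun c => ((Submodule.mapQ r r (ρ' (Quotient.out c) : M' →ₗ[A] M') (hcρ _) *
        Submodule.mapQ r r (Φ' t : M' →ₗ[A] M') (hcΦ t) : Module.End A (M' ⧸ r)) :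
          (M' ⧸ r) →ₗ[A] (M' ⧸ r))) with hTQ
    have square3 : TQ ∘ₗ EtaleAux.dmap (dec := dec) A (fun _ : ι => π) = π ∘ₗ T' := by
      refine DirectSum.linearMap_ext A fun c => ?_
      ext x
      simp only [LinearMap.comp_apply, hTQ, hT', DirectSum.toModule_lof, EtaleAux.dmap_lof,
        Module.End.mul_apply, hπ, Submodule.mkQ_apply, Submodule.mapQ_apply]
    have square3p : ∀ z, TQ (EtaleAux.dmap (dec := dec) A (fun _ : ι => π) z) = π (T' z) :=
      fun z => LinearMap.congr_fun square3 z
    constructor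
    · rw [← LinearMap.ker_eq_bot]
      refine LinearMap.ker_eq_bot'.mpr fun z hz => ?_
      set x : ⨁ _ : ι, M' :=
        DFinsupp.mk z.support (fun c => Function.surjInv r.mkQ_surjective (z c.1)) with hxdef
      have hmap : EtaleAux.dmap (dec := dec) A (fun _ : ι => π) x = z := by
        refine DFinsupp.ext fun c => ?_
        rw [EtaleAux.dmap_apply]
        by_cases hc : c ∈ z.support
        · rw [hxdef, DFinsupp.mk_apply, dif_pos hc]
          exact Function.surjInv_eq r.mkQ_surjective (z c)
        · rw [hxdef, DFinsupp.mk_apply, dif_neg hc, map_zero]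
          exact (DFinsupp.notMem_support_iff.mp hc).symm
      have h0 : π (T' x) = 0 := by rw [← square3p, hmap, hz]
      have hmem : T' x ∈ r := by
        rwa [← Submodule.ker_mkQ r, LinearMap.mem_ker]
      obtain ⟨m, hm⟩ := hmem
      obtain ⟨y, hy⟩ := hTbij.surjective m
      have h1 : T' (EtaleAux.dmap (dec := dec) A (fun _ : ι => f) y) = T' x := by
        rw [← LinearMap.comp_apply, ← square2, LinearMap.comp_apply, hy, hm]
      have hxy : EtaleAux.dmap (dec := dec) A (fun _ : ι => f) y = x := hT'bij.injective h1
      rw [← hmap, ← hxy]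
      refine DFinsupp.ext fun c => ?_
      rw [EtaleAux.dmap_apply, EtaleAux.dmap_apply, DirectSum.zero_apply, hπ,
        Submodule.mkQ_apply]
      exact (Submodule.Quotient.mk_eq_zero _).mpr ⟨y c, rfl⟩
    · intro q
      obtain ⟨m', rfl⟩ := r.mkQ_surjective q
      obtain ⟨x, hx⟩ := hT'bij.surjective m'
      exact ⟨EtaleAux.dmap (dec := dec) A (fun _ : ι => π) x, by rw [square3p, hx]⟩
end

section
/- Let M be an A[P₊]-module such that the action φ of the single element s is étale, i.e., φ is injective and M = ⨁_{u ∈ J(N₀/sN₀s⁻¹)} u φ(M). Then M is an étale A[P₊]-module, i.e., the action of every t ∈ L₊ is étale. -/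
open scoped Classical

/-!
STATEMENT 12: Let `M` be an `A[P₊]`-module such that the action `φ` of the single
element `s` is étale.  Then `M` is an étale `A[P₊]`-module, i.e. the action of every
`t ∈ L₊` is étale.
-/

variable {P : Type*} [Group P]

lemma mem_conjSub {N₀ : Subgroup P} {t : P} {u : ↥N₀} :
    u ∈ conjSub N₀ t ↔ t⁻¹ * (u : P) * t ∈ N₀ := Iff.rfl

section Setup

structure EtaleSetup (A : Type*) [CommRing A] (N₀ : Subgroup P) (Lp : Submonoid P)
    (M : Type*) [AddCommGroup M] [Module A M] where
  ρ : ↥N₀ →* Module.End A M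
  Φ : ↥Lp →* Module.End A M
  conj : ∀ (t : ↥Lp) (u : ↥N₀), (t : P) * u * (t : P)⁻¹ ∈ N₀
  compat : ∀ (t : ↥Lp) (u : ↥N₀) (m : M),
    Φ t (ρ u m) = ρ ⟨(t : P) * u * (t : P)⁻¹, conj t u⟩ (Φ t m)

namespace EtaleSetup

variable {A : Type*} [CommRing A] {N₀ : Subgroup P} {Lp : Submonoid P}
  {M : Type*} [AddCommGroup M] [Module A M]
  (S : EtaleSetup A N₀ Lp M)

/-- conjugation of `N₀` by `t ∈ Lp`. -/
def c (t : ↥Lp) (u : ↥N₀) : ↥N₀ := ⟨(t : P) * u * (t : P)⁻¹, S.conj t u⟩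

@[simp] lemma coe_c (t : ↥Lp) (u : ↥N₀) : (S.c t u : P) = (t : P) * u * (t : P)⁻¹ := rfl

/-- inverse conjugation, defined on `conjSub`. -/
def d (_ : EtaleSetup A N₀ Lp M) (t : ↥Lp) (h : ↥N₀) (hh : h ∈ conjSub N₀ (t : P)) : ↥N₀ :=
  ⟨(t : P)⁻¹ * h * t, hh⟩

@[simp] lemma coe_d (t : ↥Lp) (h : ↥N₀) (hh : h ∈ conjSub N₀ (t : P)) :
    (S.d t h hh : P) = (t : P)⁻¹ * h * t := rfl

lemma c_d (t : ↥Lp) (h : ↥N₀) (hh : h ∈ conjSub N₀ (t : P)) :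
    S.c t (S.d t h hh) = h := by
  apply Subtype.ext
  show (t : P) * ((t : P)⁻¹ * h * t) * (t : P)⁻¹ = h
  group

lemma compat' (t : ↥Lp) (u : ↥N₀) (m : M) :
    S.Φ t (S.ρ u m) = S.ρ (S.c t u) (S.Φ t m) := S.compat t u m

lemma absorb (t : ↥Lp) (h : ↥N₀) (hh : h ∈ conjSub N₀ (t : P)) (m : M) :
    S.ρ h (S.Φ t m) = S.Φ t (S.ρ (S.d t h hh) m) := by
  rw [S.compat', S.c_d]

lemma ρ_mul_apply (u v : ↥N₀) (m : M) : S.ρ u (S.ρ v m) = S.ρ (u * v) m := by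
  rw [map_mul]; rfl

lemma Φ_mul_apply (a b : ↥Lp) (m : M) : S.Φ a (S.Φ b m) = S.Φ (a * b) m := by
  rw [map_mul]; rfl

lemma ρ_eq_zero {u : ↥N₀} {m : M} (h : S.ρ u m = 0) : m = 0 := by
  have : S.ρ u⁻¹ (S.ρ u m) = m := by
    rw [S.ρ_mul_apply, inv_mul_cancel, map_one]; rfl
  rw [h, map_zero] at this; exact this.symm

/-- generalized injectivity property -/
def InjG (t : ↥Lp) : Prop :=
  ∀ T : Finset ↥N₀,
    (∀ u ∈ T, ∀ v ∈ T, u⁻¹ * v ∈ conjSub N₀ (t : P) → u = v) →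
    ∀ x : ↥N₀ → M, ∑ u ∈ T, S.ρ u (S.Φ t (x u)) = 0 → ∀ u ∈ T, x u = 0

/-- generalized surjectivity property -/
def SurjG (t : ↥Lp) : Prop :=
  (⨆ u : ↥N₀, LinearMap.range (S.ρ u * S.Φ t)) = ⊤

def Nice (t : ↥Lp) : Prop :=
  Function.Injective (S.Φ t) ∧ S.InjG t ∧ S.SurjG t

lemma out_inv_mul_mem (t : P) (u : ↥N₀) :
    (Quotient.out ((u : ↥N₀ ⧸ conjSub N₀ t)))⁻¹ * u ∈ conjSub N₀ t :=
  QuotientGroup.eq.mp (QuotientGroup.out_eq' _)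


lemma nice_one : S.Nice 1 := by
  have hΦ1 : ∀ m : M, S.Φ 1 m = m := by
    intro m; rw [map_one]; rfl
  refine ⟨fun x y hxy => by rwa [hΦ1, hΦ1] at hxy, ?_, ?_⟩
  · intro T hT x hsum u hu
    have hsingle : ∀ v ∈ T, v = u := by
      intro v hv
      exact (hT u hu v hv (by
        show ((1 : ↥Lp) : P)⁻¹ * ((u⁻¹ * v : ↥N₀) : P) * 1 ∈ N₀
        simpa using (u⁻¹ * v : ↥N₀).2)).symm
    have hTeq : T = {u} := by
      apply Finset.eq_singleton_iff_unique_mem.mpr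
      exact ⟨hu, hsingle⟩
    rw [hTeq, Finset.sum_singleton] at hsum
    have := S.ρ_eq_zero hsum
    rwa [hΦ1] at this
  · rw [SurjG, eq_top_iff]
    intro m _
    apply Submodule.mem_iSup_of_mem (1 : ↥N₀)
    exact ⟨m, by rw [Module.End.mul_apply, hΦ1, map_one]; rfl⟩

lemma injective_of_mul_left {a b : ↥Lp} (h : Function.Injective (S.Φ (a * b))) :
    Function.Injective (S.Φ b) := by
  intro x y hxy
  apply h
  rw [← S.Φ_mul_apply, ← S.Φ_mul_apply, hxy]

lemma surjG_of_mul_right {a b : ↥Lp} (h : S.SurjG (a * b)) : S.SurjG a := by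
  rw [SurjG, eq_top_iff]
  intro m _
  have hm : m ∈ ⨆ u : ↥N₀, LinearMap.range (S.ρ u * S.Φ (a * b)) := h ▸ Submodule.mem_top
  refine Submodule.iSup_induction _
    (motive := fun m => m ∈ ⨆ u : ↥N₀, LinearMap.range (S.ρ u * S.Φ a)) hm
    (fun u z hz => ?_) (Submodule.zero_mem _)
    (fun x y hx hy => Submodule.add_mem _ hx hy)
  obtain ⟨w, rfl⟩ := hz
  apply Submodule.mem_iSup_of_mem u
  exact ⟨S.Φ b w, by rw [Module.End.mul_apply, Module.End.mul_apply, S.Φ_mul_apply]⟩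


lemma surjG_mul {a b : ↥Lp} (ha : S.SurjG a) (hb : S.SurjG b) : S.SurjG (a * b) := by
  rw [SurjG, eq_top_iff]
  intro m _
  have hm : m ∈ ⨆ u : ↥N₀, LinearMap.range (S.ρ u * S.Φ a) := ha ▸ Submodule.mem_top
  refine Submodule.iSup_induction _
    (motive := fun m => m ∈ ⨆ u : ↥N₀, LinearMap.range (S.ρ u * S.Φ (a * b))) hm
    (fun u z hz => ?_) (Submodule.zero_mem _)
    (fun x y hx hy => Submodule.add_mem _ hx hy)
  obtain ⟨w, rfl⟩ := hz
  have hw : w ∈ ⨆ u : ↥N₀, LinearMap.range (S.ρ u * S.Φ b) := hb ▸ Submodule.mem_top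
  rw [Module.End.mul_apply]
  refine Submodule.iSup_induction _
    (motive := fun w => S.ρ u (S.Φ a w) ∈ ⨆ u : ↥N₀, LinearMap.range (S.ρ u * S.Φ (a * b))) hw
    (fun v z hz => ?_) (by simp [Submodule.zero_mem])
    (fun x y hx hy => by rw [map_add, map_add]; exact Submodule.add_mem _ hx hy)
  obtain ⟨w, rfl⟩ := hz
  apply Submodule.mem_iSup_of_mem (u * S.c a v)
  refine ⟨w, ?_⟩
  rw [Module.End.mul_apply, Module.End.mul_apply, ← S.ρ_mul_apply, ← S.Φ_mul_apply, S.compat']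


lemma c_injective (r : ↥Lp) : Function.Injective (S.c r) := by
  intro u v huv
  have : (r : P) * u * (r : P)⁻¹ = (r : P) * v * (r : P)⁻¹ := congrArg Subtype.val huv
  apply Subtype.ext
  exact mul_left_cancel (mul_right_cancel this)

lemma injG_of_mul_left {r t : ↥Lp} (h : S.InjG (r * t)) : S.InjG t := by
  intro T hT x hsum u₀ hu₀
  set e : ↥N₀ → ↥N₀ := S.c r with he
  set x' : ↥N₀ → M := fun v => if hv : (r : P)⁻¹ * v * r ∈ N₀ then x ⟨_, hv⟩ else 0 with hx'
  have hx'e : ∀ u : ↥N₀, x' (e u) = x u := by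
    intro u
    have hcond : (r : P)⁻¹ * (e u : P) * r ∈ N₀ := by
      have : (r : P)⁻¹ * (e u : P) * r = (u : P) := by rw [he, coe_c]; group
      rw [this]; exact u.2
    rw [hx']
    simp only [dif_pos hcond]
    congr 1
    apply Subtype.ext
    show (r : P)⁻¹ * (e u : P) * r = (u : P)
    rw [he, coe_c]; group
  have heinj : ∀ w ∈ T, ∀ v ∈ T, e w = e v → w = v := fun w _ v _ hwv => S.c_injective r hwv
  have hsum' : ∑ v ∈ T.image e, S.ρ v (S.Φ (r * t) (x' v)) = 0 := by
    rw [Finset.sum_image heinj]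
    have : ∀ u ∈ T, S.ρ (e u) (S.Φ (r * t) (x' (e u))) = S.Φ r (S.ρ u (S.Φ t (x u))) := by
      intro u _
      rw [hx'e, S.compat', ← he, S.Φ_mul_apply]
    rw [Finset.sum_congr rfl this, ← map_sum, hsum, map_zero]
  have hT' : ∀ w ∈ T.image e, ∀ v ∈ T.image e, w⁻¹ * v ∈ conjSub N₀ ((r * t : ↥Lp) : P) → w = v := by
    intro w hw v hv hmem
    obtain ⟨w₀, hw₀, rfl⟩ := Finset.mem_image.mp hw
    obtain ⟨v₀, hv₀, rfl⟩ := Finset.mem_image.mp hv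
    rw [mem_conjSub] at hmem
    have key : ((r * t : ↥Lp) : P)⁻¹ * ((e w₀)⁻¹ * e v₀ : ↥N₀) * ((r * t : ↥Lp) : P)
        = (t : P)⁻¹ * ((w₀⁻¹ * v₀ : ↥N₀) : P) * t := by
      push_cast [he, S.coe_c]
      group
    rw [key] at hmem
    exact congrArg e (hT w₀ hw₀ v₀ hv₀ (mem_conjSub.mpr hmem))
  have := h (T.image e) hT' x' hsum' (e u₀) (Finset.mem_image_of_mem e hu₀)
  rwa [hx'e] at this


lemma injG_mul {a b : ↥Lp} (ha : S.InjG a) (hb : S.InjG b) : S.InjG (a * b) := by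
  intro T hT x hsum u₀ hu₀
  set g : ↥N₀ → ↥N₀ ⧸ conjSub N₀ (a : P) := QuotientGroup.mk with hg
  have hgout : ∀ c : ↥N₀ ⧸ conjSub N₀ (a : P), g (Quotient.out c) = c := fun c =>
    QuotientGroup.out_eq' c
  have hmem : ∀ u : ↥N₀, (Quotient.out (g u))⁻¹ * u ∈ conjSub N₀ (a : P) := fun u =>
    out_inv_mul_mem (a : P) u
  set e : ↥N₀ → ↥N₀ := fun u => S.d a ((Quotient.out (g u))⁻¹ * u) (hmem u) with he
  have hce : ∀ u : ↥N₀, S.c a (e u) = (Quotient.out (g u))⁻¹ * u := fun u =>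
    S.c_d a _ (hmem u)
  have hrecover : ∀ u : ↥N₀, Quotient.out (g u) * S.c a (e u) = u := by
    intro u; rw [hce]; exact mul_inv_cancel_left _ _
  set x' : ↥N₀ → M := fun w => ∑ u ∈ T.filter (fun u => g u = g w), S.ρ (e u) (S.Φ b (x u))
    with hx'
  set T' : Finset ↥N₀ := (T.image g).image Quotient.out with hT'def
  have key : ∀ c ∈ T.image g, S.ρ (Quotient.out c) (S.Φ a (x' (Quotient.out c)))
      = ∑ u ∈ T.filter (fun u => g u = c), S.ρ u (S.Φ (a * b) (x u)) := by
    intro c _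
    rw [hx']
    simp only [hgout c]
    rw [map_sum, map_sum]
    apply Finset.sum_congr rfl
    intro u hu
    have hgu : g u = c := (Finset.mem_filter.mp hu).2
    rw [S.compat' a (e u), hce u, hgu, S.ρ_mul_apply, mul_inv_cancel_left, S.Φ_mul_apply]
  have hsum1 : ∑ w ∈ T', S.ρ w (S.Φ a (x' w)) = 0 := by
    calc ∑ w ∈ T', S.ρ w (S.Φ a (x' w))
        = ∑ c ∈ T.image g, S.ρ (Quotient.out c) (S.Φ a (x' (Quotient.out c))) :=
          Finset.sum_image (fun w _ v _ h => Quotient.out_injective h)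
      _ = ∑ c ∈ T.image g, ∑ u ∈ T.filter (fun u => g u = c), S.ρ u (S.Φ (a * b) (x u)) :=
          Finset.sum_congr rfl key
      _ = ∑ u ∈ T, S.ρ u (S.Φ (a * b) (x u)) :=
          Finset.sum_fiberwise_of_maps_to (fun u hu => Finset.mem_image_of_mem g hu) _
      _ = 0 := hsum
  have hT'pair : ∀ w ∈ T', ∀ v ∈ T', w⁻¹ * v ∈ conjSub N₀ (a : P) → w = v := by
    intro w hw v hv hmem'
    obtain ⟨cw, _, rfl⟩ := Finset.mem_image.mp hw
    obtain ⟨cv, _, rfl⟩ := Finset.mem_image.mp hv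
    have : cw = cv := by
      rw [← QuotientGroup.out_eq' cw, ← QuotientGroup.out_eq' cv]
      exact QuotientGroup.eq.mpr hmem'
    rw [this]
  have hx'0 := ha T' hT'pair x' hsum1
  set c₀ := g u₀ with hc₀
  have houtc₀ : Quotient.out c₀ ∈ T' :=
    Finset.mem_image_of_mem _ (Finset.mem_image_of_mem g hu₀)
  have hx'c₀ : ∑ u ∈ T.filter (fun u => g u = c₀), S.ρ (e u) (S.Φ b (x u)) = 0 := by
    have := hx'0 _ houtc₀
    rw [hx'] at this
    simpa only [hgout c₀] using this
  set F := T.filter (fun u => g u = c₀) with hF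
  have hgF : ∀ u ∈ F, g u = c₀ := fun u hu => (Finset.mem_filter.mp hu).2
  have heinj : ∀ u ∈ F, ∀ v ∈ F, e u = e v → u = v := by
    intro u hu v hv huv
    rw [← hrecover u, ← hrecover v, huv, hgF u hu, hgF v hv]
  set x'' : ↥N₀ → M := fun w => x (Quotient.out c₀ * S.c a w) with hx''
  have hx''e : ∀ u ∈ F, x'' (e u) = x u := by
    intro u hu
    rw [hx'']
    simp only []
    rw [show Quotient.out c₀ * S.c a (e u) = u by rw [← hgF u hu]; exact hrecover u]
  have hsum2 : ∑ w ∈ F.image e, S.ρ w (S.Φ b (x'' w)) = 0 := by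
    calc ∑ w ∈ F.image e, S.ρ w (S.Φ b (x'' w))
        = ∑ u ∈ F, S.ρ (e u) (S.Φ b (x'' (e u))) := Finset.sum_image heinj
      _ = ∑ u ∈ F, S.ρ (e u) (S.Φ b (x u)) :=
          Finset.sum_congr rfl (fun u hu => by rw [hx''e u hu])
      _ = 0 := hx'c₀
  have hFpair : ∀ w ∈ F.image e, ∀ v ∈ F.image e, w⁻¹ * v ∈ conjSub N₀ ((b : ↥Lp) : P) → w = v := by
    intro w hw v hv hmem'
    obtain ⟨u, hu, rfl⟩ := Finset.mem_image.mp hw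
    obtain ⟨v₀, hv₀, rfl⟩ := Finset.mem_image.mp hv
    rw [mem_conjSub] at hmem'
    have key2 : (b : P)⁻¹ * ((e u)⁻¹ * e v₀ : ↥N₀) * (b : P)
        = ((a * b : ↥Lp) : P)⁻¹ * ((u⁻¹ * v₀ : ↥N₀) : P) * ((a * b : ↥Lp) : P) := by
      have h1 : ((e u)⁻¹ * e v₀ : ↥N₀) = ((e u : ↥N₀)⁻¹ : ↥N₀) * e v₀ := rfl
      push_cast [he, S.coe_d, hgF u hu, hgF v₀ hv₀]
      group
    rw [key2] at hmem'
    have := hT u (Finset.mem_of_mem_filter u hu) v₀ (Finset.mem_of_mem_filter v₀ hv₀)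
      (mem_conjSub.mpr hmem')
    rw [this]
  have := hb (F.image e) hFpair x'' hsum2 (e u₀)
    (Finset.mem_image_of_mem e (Finset.mem_filter.mpr ⟨hu₀, rfl⟩))
  rw [hx''e u₀ (Finset.mem_filter.mpr ⟨hu₀, rfl⟩)] at this
  exact this


lemma range_le (t : ↥Lp) (u : ↥N₀) :
    LinearMap.range (S.ρ u * S.Φ t) ≤
      LinearMap.range (S.ρ (Quotient.out ((u : ↥N₀ ⧸ conjSub N₀ (t : P)))) * S.Φ t) := by
  rintro _ ⟨m, rfl⟩
  set c : ↥N₀ ⧸ conjSub N₀ (t : P) := (u : ↥N₀ ⧸ conjSub N₀ (t : P)) with hc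
  have hmem : (Quotient.out c)⁻¹ * u ∈ conjSub N₀ (t : P) := out_inv_mul_mem (t : P) u
  refine ⟨S.ρ (S.d t _ hmem) m, ?_⟩
  rw [Module.End.mul_apply, Module.End.mul_apply, ← S.absorb t _ hmem, S.ρ_mul_apply,
    mul_inv_cancel_left]

lemma etale_of_nice {t : ↥Lp} (h : S.Nice t) :
    IsEtaleAt A N₀ (t : P) (fun u => S.ρ u) (S.Φ t) := by
  obtain ⟨hinj, hInjG, hSurjG⟩ := h
  refine ⟨hinj, ?_⟩
  rw [DirectSum.isInternal_submodule_iff_iSupIndep_and_iSup_eq_top]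
  constructor
  · rw [iSupIndep_iff_dfinsupp_lsum_injective]
    rw [injective_iff_map_eq_zero]
    intro v hv
    have hvsum : (v.sum fun c m => ((m : M))) = 0 := by
      have := hv
      rw [DFinsupp.lsum_apply_apply, DFinsupp.sumAddHom_apply] at this
      exact this
    -- choose preimages
    set x : ↥N₀ → M := fun u =>
      Classical.choose ((v ((u : ↥N₀ ⧸ conjSub N₀ (t : P)))).2) with hx
    have hxspec : ∀ u : ↥N₀,
        (S.ρ (Quotient.out ((u : ↥N₀ ⧸ conjSub N₀ (t : P)))) * S.Φ t) (x u)
          = (v ((u : ↥N₀ ⧸ conjSub N₀ (t : P))) : M) := fun u =>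
      Classical.choose_spec ((v ((u : ↥N₀ ⧸ conjSub N₀ (t : P)))).2)
    have hxout : ∀ c : ↥N₀ ⧸ conjSub N₀ (t : P),
        S.ρ (Quotient.out c) (S.Φ t (x (Quotient.out c))) = (v c : M) := by
      intro c
      have := hxspec (Quotient.out c)
      rw [QuotientGroup.out_eq' c] at this
      rw [← this, Module.End.mul_apply]
    set T : Finset ↥N₀ := v.support.image Quotient.out with hT
    have hTpair : ∀ w ∈ T, ∀ z ∈ T, w⁻¹ * z ∈ conjSub N₀ (t : P) → w = z := by
      intro w hw z hz hmem'
      obtain ⟨cw, _, rfl⟩ := Finset.mem_image.mp hw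
      obtain ⟨cz, _, rfl⟩ := Finset.mem_image.mp hz
      have : cw = cz := by
        rw [← QuotientGroup.out_eq' cw, ← QuotientGroup.out_eq' cz]
        exact QuotientGroup.eq.mpr hmem'
      rw [this]
    have hsum : ∑ u ∈ T, S.ρ u (S.Φ t (x u)) = 0 := by
      calc ∑ u ∈ T, S.ρ u (S.Φ t (x u))
          = ∑ c ∈ v.support, S.ρ (Quotient.out c) (S.Φ t (x (Quotient.out c))) :=
            Finset.sum_image (fun w _ z _ hh => Quotient.out_injective hh)
        _ = ∑ c ∈ v.support, ((v c : M)) := Finset.sum_congr rfl (fun c _ => hxout c)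
        _ = 0 := hvsum
    have hx0 := hInjG T hTpair x hsum
    ext c
    by_cases hc : c ∈ v.support
    · have : x (Quotient.out c) = 0 :=
        hx0 _ (Finset.mem_image_of_mem _ hc)
      have h0 : (v c : M) = 0 := by rw [← hxout c, this, map_zero, map_zero]
      rw [DFinsupp.zero_apply]
      simpa using h0
    · simpa using DFinsupp.notMem_support_iff.mp hc
  · rw [eq_top_iff, ← hSurjG]
    apply iSup_le
    intro u
    exact le_trans (S.range_le t u)
      (le_iSup (fun c : ↥N₀ ⧸ conjSub N₀ (t : P) =>
        LinearMap.range (S.ρ (Quotient.out c) * S.Φ t)) ((u : ↥N₀ ⧸ conjSub N₀ (t : P))))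

lemma nice_of_etale {t : ↥Lp} (h : IsEtaleAt A N₀ (t : P) (fun u => S.ρ u) (S.Φ t)) :
    S.Nice t := by
  obtain ⟨hinj, hint⟩ := h
  rw [DirectSum.isInternal_submodule_iff_iSupIndep_and_iSup_eq_top] at hint
  obtain ⟨hindep, hsup⟩ := hint
  refine ⟨hinj, ?_, ?_⟩
  · have hlsum : Function.Injective ⇑((DFinsupp.lsum ℕ)
        fun c : ↥N₀ ⧸ conjSub N₀ ((t : ↥Lp) : P) =>
          (LinearMap.range (S.ρ (Quotient.out c) * S.Φ t)).subtype) :=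
      (iSupIndep_iff_dfinsupp_lsum_injective _).mp hindep
    intro T hTpair x hsum u₀ hu₀
    have hmkinj : ∀ u ∈ T, ∀ z ∈ T,
        ((u : ↥N₀ ⧸ conjSub N₀ (t : P))) = ((z : ↥N₀ ⧸ conjSub N₀ (t : P))) → u = z := by
      intro u hu z hz huz
      exact hTpair u hu z hz (QuotientGroup.eq.mp huz)
    have pmem : ∀ u : ↥N₀, S.ρ u (S.Φ t (x u)) ∈
        LinearMap.range (S.ρ (Quotient.out ((u : ↥N₀ ⧸ conjSub N₀ (t : P)))) * S.Φ t) :=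
      fun u => S.range_le t u ⟨x u, rfl⟩
    set f : ↥N₀ → Π₀ c : ↥N₀ ⧸ conjSub N₀ (t : P),
        ↥(LinearMap.range (S.ρ (Quotient.out c) * S.Φ t)) :=
      fun u => DFinsupp.single ((u : ↥N₀ ⧸ conjSub N₀ (t : P))) ⟨_, pmem u⟩ with hf
    set v : Π₀ c : ↥N₀ ⧸ conjSub N₀ (t : P),
        ↥(LinearMap.range (S.ρ (Quotient.out c) * S.Φ t)) := ∑ u ∈ T, f u with hv
    have hlv : (DFinsupp.lsum ℕ (fun c : ↥N₀ ⧸ conjSub N₀ ((t : ↥Lp) : P) =>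
        (LinearMap.range (S.ρ (Quotient.out c) * S.Φ t)).subtype)) v = 0 := by
      rw [hv, map_sum]
      refine (Finset.sum_congr rfl fun u _ => ?_).trans hsum
      rw [hf]
      exact DFinsupp.lsum_single _ _ _ _
    have hv0 : v = 0 := hlsum (hlv.trans (map_zero _).symm)
    have := congrArg (fun w => w ((u₀ : ↥N₀ ⧸ conjSub N₀ (t : P)))) hv0
    simp only [hv, DFinsupp.finset_sum_apply, DFinsupp.zero_apply] at this
    have hM := congrArg Subtype.val this
    rw [AddSubmonoidClass.coe_finset_sum] at hM
    have hcoe : ∀ z ∈ T, z ≠ u₀ →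
        ((f z ((u₀ : ↥N₀ ⧸ conjSub N₀ (t : P)))) : M) = 0 := by
      intro z hz hne
      rw [hf]
      rw [DFinsupp.single_eq_of_ne (fun hc => hne (hmkinj z hz u₀ hu₀ hc.symm))]
      rfl
    rw [Finset.sum_eq_single u₀ hcoe (fun habs => absurd hu₀ habs)] at hM
    rw [hf] at hM
    rw [DFinsupp.single_eq_same] at hM
    have h0 : S.ρ u₀ (S.Φ t (x u₀)) = 0 := hM
    exact hinj (by rw [S.ρ_eq_zero h0, map_zero])
  · rw [SurjG, eq_top_iff, ← hsup]
    apply iSup_le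
    intro c
    exact le_iSup (fun u : ↥N₀ => LinearMap.range (S.ρ u * S.Φ t)) (Quotient.out c)


lemma nice_mul {a b : ↥Lp} (ha : S.Nice a) (hb : S.Nice b) : S.Nice (a * b) := by
  refine ⟨?_, S.injG_mul ha.2.1 hb.2.1, S.surjG_mul ha.2.2 hb.2.2⟩
  intro x y hxy
  rw [← S.Φ_mul_apply, ← S.Φ_mul_apply] at hxy
  exact hb.1 (ha.1 hxy)

lemma nice_right {r t : ↥Lp} (hcomm : r * t = t * r) (h : S.Nice (r * t)) : S.Nice t := by
  refine ⟨S.injective_of_mul_left h.1, S.injG_of_mul_left h.2.1, ?_⟩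
  exact S.surjG_of_mul_right (a := t) (b := r) (hcomm ▸ h).2.2

end EtaleSetup
end Setup

/-- **(Prop. 3.19 of the paper.)**  If the action of the central element `s` on the
`A[P₊]`-module `M` is étale, then the action of every `t ∈ L₊` is étale. -/
theorem etale_of_etale_s (A : Type*) [CommRing A] (N₀ : Subgroup P) (Lp : Submonoid P)
    (hconj : ∀ t ∈ Lp, ∀ u ∈ N₀, t * u * t⁻¹ ∈ N₀)
    (s : P) (hsLp : s ∈ Lp)
    (hcentral : ∀ t ∈ Lp, Commute s t)
    (hdom : ∀ t ∈ Lp, ∃ k : ℕ, s ^ k * t⁻¹ ∈ Lp)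
    {M : Type*} [AddCommGroup M] [Module A M]
    (ρ : ↥N₀ →* Module.End A M) (Φ : ↥Lp →* Module.End A M)
    (hcompat : ∀ (t : ↥Lp) (u : ↥N₀) (m : M),
      Φ t (ρ u m) = ρ ⟨(t : P) * u * (t : P)⁻¹, hconj t t.2 u u.2⟩ (Φ t m))
    (hetale_s : IsEtaleAt A N₀ s (fun u => ρ u) (Φ ⟨s, hsLp⟩)) :
    ∀ t : ↥Lp, IsEtaleAt A N₀ (t : P) (fun u => ρ u) (Φ t) := by
  set S : EtaleSetup A N₀ Lp M :=
    ⟨ρ, Φ, fun t u => hconj t t.2 u u.2, hcompat⟩ with hS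
  set σ : ↥Lp := ⟨s, hsLp⟩ with hσ
  have hNσ : S.Nice σ := S.nice_of_etale hetale_s
  have hpow : ∀ k : ℕ, S.Nice (σ ^ k) := by
    intro k
    induction k with
    | zero => rw [pow_zero]; exact S.nice_one
    | succ k ih => rw [pow_succ]; exact S.nice_mul ih hNσ
  intro t
  obtain ⟨k, hk⟩ := hdom t t.2
  set r : ↥Lp := ⟨s ^ k * (t : P)⁻¹, hk⟩ with hr
  have hrt : r * t = σ ^ k := by
    apply Subtype.ext
    push_cast
    show s ^ k * (t : P)⁻¹ * t = s ^ k
    group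
  have hcomm : r * t = t * r := by
    apply Subtype.ext
    have hc : Commute (s ^ k) (t : P) := (hcentral t t.2).pow_left k
    push_cast
    calc (s ^ k * (t : P)⁻¹) * t = s ^ k := by group
      _ = (t : P) * (s ^ k * (t : P)⁻¹) := by
          rw [← mul_assoc, ← hc.eq, mul_inv_cancel_right]
  exact S.etale_of_nice (S.nice_right hcomm (hrt ▸ hpow k))
end

section
/- An A[P₊]-submodule M' of an étale A[P₊]-module M is itself étale if and only if M' is stable under the canonical left inverse ψ of the action φ of s. -/
open scoped Classical

/-!
STATEMENT 13: An `A[P₊]`-submodule `M'` of an étale `A[P₊]`-module `M` is itself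
étale if and only if `M'` is stable under the canonical left inverse `ψ` of the
action `φ` of `s`.
-/

variable {P : Type*} [Group P]

/-- **(Cor. 3.20 of the paper.)**  An `A[P₊]`-submodule `M'` of an étale
`A[P₊]`-module `M` is étale (with the restricted actions) iff it is `ψ`-stable,
where `ψ` is the canonical left inverse of the action `φ` of `s`. -/
theorem submodule_etale_iff_psi_stable (A : Type*) [CommRing A]
    (N₀ : Subgroup P) (Lp : Submonoid P)
    (hconj : ∀ t ∈ Lp, ∀ u ∈ N₀, t * u * t⁻¹ ∈ N₀)
    (s : P) (hsLp : s ∈ Lp)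
    (hcentral : ∀ t ∈ Lp, Commute s t)
    (hdom : ∀ t ∈ Lp, ∃ k : ℕ, s ^ k * t⁻¹ ∈ Lp)
    {M : Type*} [AddCommGroup M] [Module A M]
    (ρ : ↥N₀ →* Module.End A M) (Φ : ↥Lp →* Module.End A M)
    (hcompat : ∀ (t : ↥Lp) (u : ↥N₀) (m : M),
      Φ t (ρ u m) = ρ ⟨(t : P) * u * (t : P)⁻¹, hconj t t.2 u u.2⟩ (Φ t m))
    (hetale : ∀ t : ↥Lp, IsEtaleAt A N₀ (t : P) (fun u => ρ u) (Φ t))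
    (ψ : Module.End A M)
    (hψφ : ψ * Φ ⟨s, hsLp⟩ = 1)
    (hvanish : ∀ u : ↥N₀, u ∉ conjSub N₀ s → ∀ m : M, ψ (ρ u (Φ ⟨s, hsLp⟩ m)) = 0)
    (M' : Submodule A M)
    (hρst : ∀ u : ↥N₀, ∀ x ∈ M', ρ u x ∈ M')
    (hΦst : ∀ t : ↥Lp, ∀ x ∈ M', Φ t x ∈ M') :
    (∀ x ∈ M', ψ x ∈ M') ↔
      ∀ t : ↥Lp, IsEtaleAt A N₀ (t : P)
        (fun u : ↥N₀ => ((ρ u : M →ₗ[A] M).restrict (hρst u) : Module.End A ↥M'))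
        ((Φ t : M →ₗ[A] M).restrict (hΦst t)) := by
  classical
  set σ : ↥Lp := (⟨s, hsLp⟩ : ↥Lp) with hσdef
  have hψφ' : ∀ z : M, ψ (Φ σ z) = z := fun z => by
    rw [← Module.End.mul_apply, hψφ, Module.End.one_apply]
  have L1 : ∀ k : ℕ, ψ ^ k * (Φ σ) ^ k = 1 := by
    intro k; induction k with
    | zero => simp
    | succ k ih =>
      rw [pow_succ ψ, pow_succ' (Φ σ), mul_assoc, ← mul_assoc ψ, hψφ, one_mul, ih]
  have K : ∀ (k : ℕ) (w : ↥N₀) (m : M), (s ^ k)⁻¹ * (w : P) * s ^ k ∉ N₀ →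
      (ψ ^ k) (ρ w (((Φ σ) ^ k) m)) = 0 := by
    intro k
    induction k with
    | zero =>
      intro w m h
      exact absurd (by simpa using w.2) h
    | succ k ih =>
      intro w m h
      have hpow : ((Φ σ) ^ (k + 1)) m = Φ σ (((Φ σ) ^ k) m) := by
        rw [pow_succ' (Φ σ)]; rfl
      have hpowψ : ∀ z : M, (ψ ^ (k + 1)) z = (ψ ^ k) (ψ z) := fun z => by
        rw [pow_succ ψ]; rfl
      rw [hpow, hpowψ]
      by_cases hw : w ∈ conjSub N₀ s
      · have hw' : s⁻¹ * (w : P) * s ∈ N₀ := hw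
        have hww : (⟨(σ : P) * ((⟨s⁻¹ * (w : P) * s, hw'⟩ : ↥N₀) : P) * (σ : P)⁻¹,
            hconj σ σ.2 _ (⟨s⁻¹ * (w : P) * s, hw'⟩ : ↥N₀).2⟩ : ↥N₀) = w := by
          ext
          show s * (s⁻¹ * (w : P) * s) * s⁻¹ = (w : P)
          group
        have hc := hcompat σ ⟨s⁻¹ * (w : P) * s, hw'⟩ (((Φ σ) ^ k) m)
        rw [hww] at hc
        rw [← hc, hψφ']
        apply ih ⟨s⁻¹ * (w : P) * s, hw'⟩ m
        intro hmem
        apply h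
        have heq : (s ^ (k + 1))⁻¹ * (w : P) * s ^ (k + 1)
            = (s ^ k)⁻¹ * (s⁻¹ * (w : P) * s) * s ^ k := by
          rw [pow_succ]; group
        rw [heq]; exact hmem
      · rw [hvanish w hw, map_zero]
  have hcoe : ∀ (t : ↥Lp) (u : ↥N₀) (z : ↥M'),
      ((((ρ u : M →ₗ[A] M).restrict (hρst u)) * ((Φ t : M →ₗ[A] M).restrict (hΦst t))) z : M)
        = ρ u (Φ t (z : M)) := by
    intro t u z
    rw [Module.End.mul_apply, LinearMap.restrict_coe_apply, LinearMap.restrict_coe_apply]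
  constructor
  · -- ψ-stable → étale on M'
    intro hψst t
    have hψkst : ∀ (n : ℕ), ∀ x ∈ M', (ψ ^ n) x ∈ M' := by
      intro n
      induction n with
      | zero => intro x hx; simpa using hx
      | succ n ih =>
        intro x hx
        rw [pow_succ, Module.End.mul_apply]
        exact ih _ (hψst x hx)
    obtain ⟨k, hk⟩ := hdom (t : P) t.2
    set t' : ↥Lp := (⟨s ^ k * (t : P)⁻¹, hk⟩ : ↥Lp) with ht'def
    have ht't : t' * t = σ ^ k := by
      ext
      simp only [Submonoid.coe_mul, SubmonoidClass.coe_pow]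
      show s ^ k * (t : P)⁻¹ * (t : P) = s ^ k
      group
    have hΦt't : Φ t' * Φ t = (Φ σ) ^ k := by rw [← map_mul, ht't, map_pow]
    set ψt : Module.End A M := ψ ^ k * Φ t' with hψtdef
    have hψtΦ : ∀ m : M, ψt (Φ t m) = m := by
      intro m
      have h1 : ψt * Φ t = 1 := by rw [hψtdef, mul_assoc, hΦt't, L1]
      rw [← Module.End.mul_apply, h1, Module.End.one_apply]
    have hψtst : ∀ x ∈ M', ψt x ∈ M' := fun x hx => by
      rw [hψtdef, Module.End.mul_apply]
      exact hψkst k _ (hΦst t' x hx)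
    have hvt : ∀ v : ↥N₀, v ∉ conjSub N₀ (t : P) → ∀ m : M, ψt (ρ v (Φ t m)) = 0 := by
      intro v hv m
      have hw : (t' : P) * (v : P) * (t' : P)⁻¹ ∈ N₀ := hconj t' t'.2 v v.2
      have hkey : (s ^ k)⁻¹ * ((t' : P) * (v : P) * (t' : P)⁻¹) * s ^ k
          = (t : P)⁻¹ * (v : P) * (t : P) := by
        show (s ^ k)⁻¹ * ((s ^ k * (t : P)⁻¹) * (v : P) * (s ^ k * (t : P)⁻¹)⁻¹) * s ^ k = _
        group
      have h0 : (s ^ k)⁻¹ * ((t' : P) * (v : P) * (t' : P)⁻¹) * s ^ k ∉ N₀ := by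
        rw [hkey]; exact hv
      have hc := hcompat t' v (Φ t m)
      have hΦΦ : Φ t' (Φ t m) = ((Φ σ) ^ k) m := by rw [← Module.End.mul_apply, hΦt't]
      rw [hψtdef, Module.End.mul_apply, hc, hΦΦ]
      exact K k ⟨_, hw⟩ m h0
    have hout : ∀ {c j : ↥N₀ ⧸ conjSub N₀ (t : P)},
        (Quotient.out c)⁻¹ * Quotient.out j ∈ conjSub N₀ (t : P) → c = j := by
      intro c j hm
      have h2 := QuotientGroup.eq.mpr hm
      rwa [QuotientGroup.out_eq', QuotientGroup.out_eq'] at h2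
    constructor
    · -- injectivity of the restriction
      intro a b hab
      have h2 := congrArg Subtype.val hab
      rw [LinearMap.restrict_coe_apply, LinearMap.restrict_coe_apply] at h2
      exact Subtype.ext ((hetale t).1 h2)
    rw [DirectSum.isInternal_submodule_iff_iSupIndep_and_iSup_eq_top]
    have hmapS : ∀ c : ↥N₀ ⧸ conjSub N₀ (t : P),
        Submodule.map M'.subtype
          (LinearMap.range ((ρ (Quotient.out c) : M →ₗ[A] M).restrict (hρst _)
            * (Φ t : M →ₗ[A] M).restrict (hΦst t)))
          ≤ LinearMap.range ((ρ (Quotient.out c) : Module.End A M) * Φ t) := by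
      rintro c x ⟨y, ⟨z, rfl⟩, rfl⟩
      exact ⟨(z : M), (hcoe t (Quotient.out c) z).symm⟩
    constructor
    · -- independence
      intro c
      rw [Submodule.disjoint_def]
      intro x hx1 hx2
      have h1 : (x : M) ∈ LinearMap.range ((ρ (Quotient.out c) : Module.End A M) * Φ t) :=
        hmapS c ⟨x, hx1, rfl⟩
      have hle : Submodule.map M'.subtype
          (⨆ j, ⨆ _ : j ≠ c, LinearMap.range ((ρ (Quotient.out j) : M →ₗ[A] M).restrict (hρst _)
            * (Φ t : M →ₗ[A] M).restrict (hΦst t)))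
          ≤ ⨆ j, ⨆ _ : j ≠ c,
            LinearMap.range ((ρ (Quotient.out j) : Module.End A M) * Φ t) := by
        rw [Submodule.map_iSup]
        refine iSup_mono fun j => ?_
        rw [Submodule.map_iSup]
        exact iSup_mono fun hj => hmapS j
      have h2 : (x : M) ∈ ⨆ j, ⨆ _ : j ≠ c,
          LinearMap.range ((ρ (Quotient.out j) : Module.End A M) * Φ t) :=
        hle (Submodule.mem_map_of_mem hx2)
      have h0 := Submodule.disjoint_def.mp ((hetale t).2.submodule_iSupIndep c) _ h1 h2
      exact Subtype.ext h0
    · -- spanning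
      rw [eq_top_iff]
      rintro x' -
      have hxtop := (Submodule.eq_top_iff'.mp (hetale t).2.submodule_iSup_eq_top) (x' : M)
      obtain ⟨f, hf, hsum⟩ := (Submodule.mem_iSup_iff_exists_finsupp _ _).mp hxtop
      have hsum' : ∑ j ∈ f.support, f j = (x' : M) := hsum
      have hterm : ∀ c j : ↥N₀ ⧸ conjSub N₀ (t : P), j ≠ c → ∀ m : M,
          ψt (ρ (Quotient.out c)⁻¹ (ρ (Quotient.out j) (Φ t m))) = 0 := by
        intro c j hj m
        rw [← Module.End.mul_apply (ρ (Quotient.out c)⁻¹) (ρ (Quotient.out j)), ← map_mul]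
        apply hvt
        intro hmem
        exact hj (hout hmem).symm
      have hkey : ∀ c ∈ f.support, ∃ m ∈ M',
          ρ (Quotient.out c) (Φ t m) = f c := by
        intro c hc
        obtain ⟨mc, hmc⟩ := hf c
        refine ⟨ψt (ρ (Quotient.out c)⁻¹ (x' : M)), hψtst _ (hρst _ _ x'.2), ?_⟩
        have hval : ψt (ρ (Quotient.out c)⁻¹ (x' : M)) = mc := by
          rw [← hsum', map_sum, map_sum]
          rw [Finset.sum_eq_single c]
          · have e1 : ((fun u : ↥N₀ => (ρ u : Module.End A M)) (Quotient.out c) * Φ t) mc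
                = ρ (Quotient.out c) (Φ t mc) := rfl
            rw [← hmc, e1, ← Module.End.mul_apply (ρ (Quotient.out c)⁻¹) (ρ (Quotient.out c)),
              ← map_mul, inv_mul_cancel, map_one, Module.End.one_apply, hψtΦ]
          · intro j hjs hj
            obtain ⟨mj, hmj⟩ := hf j
            rw [← hmj]
            exact hterm c j hj mj
          · intro hcs; exact absurd hc hcs
        rw [hval]
        exact hmc
      have hmem : (x' : M) ∈ Submodule.map M'.subtype
          (⨆ c : ↥N₀ ⧸ conjSub N₀ (t : P),
            LinearMap.range ((ρ (Quotient.out c) : M →ₗ[A] M).restrict (hρst _)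
              * (Φ t : M →ₗ[A] M).restrict (hΦst t))) := by
        rw [← hsum']
        apply Submodule.sum_mem
        intro c hc
        obtain ⟨m, hm, hmc⟩ := hkey c hc
        refine Submodule.mem_map.mpr
          ⟨((ρ (Quotient.out c) : M →ₗ[A] M).restrict (hρst _)
              * (Φ t : M →ₗ[A] M).restrict (hΦst t)) ⟨m, hm⟩,
            Submodule.mem_iSup_of_mem c (LinearMap.mem_range_self _ _), ?_⟩
        show ((((ρ (Quotient.out c) : M →ₗ[A] M).restrict (hρst _)
              * (Φ t : M →ₗ[A] M).restrict (hΦst t)) ⟨m, hm⟩ : ↥M') : M) = f c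
        rw [hcoe]
        exact hmc
      obtain ⟨y, hy, hyx⟩ := hmem
      have hxy : x' = y := Subtype.ext hyx.symm
      rw [hxy]
      exact hy
  · -- étale on M' → ψ-stable
    intro he x hx
    have h1 := he σ
    have hxtop := (Submodule.eq_top_iff'.mp h1.2.submodule_iSup_eq_top) (⟨x, hx⟩ : ↥M')
    obtain ⟨f, hf, hsum⟩ := (Submodule.mem_iSup_iff_exists_finsupp _ _).mp hxtop
    have hsum' : ∑ j ∈ f.support, f j = (⟨x, hx⟩ : ↥M') := hsum
    have hx2 : x = ∑ j ∈ f.support, ((f j : ↥M') : M) := by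
      have h3 := congrArg (M'.subtype) hsum'
      rw [map_sum] at h3
      exact h3.symm
    have hψx : ψ x = ∑ j ∈ f.support, ψ ((f j : ↥M') : M) := by
      rw [hx2, map_sum]
    rw [hψx]
    apply Submodule.sum_mem
    intro c hc
    obtain ⟨z, hz⟩ := hf c
    have hcoe2 : ((f c : ↥M') : M) = ρ (Quotient.out c) (Φ σ (z : M)) := by
      rw [← hz]
      exact hcoe σ (Quotient.out c) z
    rw [hcoe2]
    by_cases hcC : Quotient.out c ∈ conjSub N₀ s
    · have hw' : s⁻¹ * ((Quotient.out c : ↥N₀) : P) * s ∈ N₀ := hcC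
      have hww : (⟨(σ : P) * ((⟨s⁻¹ * ((Quotient.out c : ↥N₀) : P) * s, hw'⟩ : ↥N₀) : P)
            * (σ : P)⁻¹,
          hconj σ σ.2 _ (⟨s⁻¹ * ((Quotient.out c : ↥N₀) : P) * s, hw'⟩ : ↥N₀).2⟩ : ↥N₀)
          = Quotient.out c := by
        ext
        show s * (s⁻¹ * ((Quotient.out c : ↥N₀) : P) * s) * s⁻¹ = _
        group
      have hcomp := hcompat σ ⟨s⁻¹ * ((Quotient.out c : ↥N₀) : P) * s, hw'⟩ (z : M)
      rw [hww] at hcomp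
      rw [← hcomp, hψφ']
      exact hρst _ _ z.2
    · rw [hvanish _ hcC]
      exact M'.zero_mem
end

section
/- Let M be a topologically étale A[P₊]-module and C ⊆ P₊ a compact subgroup. Then the open C-stable A-submodules of M form a basis of neighborhoods of 0 in M. -/
open scoped Classical

/-!
STATEMENT 16: Let `M` be a topologically étale `A[P₊]`-module and `C ⊆ P₊` a compact
subgroup.  Then the open `C`-stable `A`-submodules of `M` form a basis of
neighborhoods of `0` in `M`.
-/

variable {P : Type*} [Group P]

/-- **(Lemma 4.3 of the paper.)**  For a topologically étale `A[P₊]`-module `M` (a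
linearly topologized `A`-module with continuous `P₊`-action) and a compact subgroup
`C ⊆ P₊`, the open `C`-stable `A`-submodules form a basis of neighborhoods of `0`. -/
theorem open_stable_submodules_basis
    [TopologicalSpace P] [IsTopologicalGroup P]
    (A : Type*) [CommRing A] [TopologicalSpace A] [IsTopologicalRing A]
    (N₀ : Subgroup P) (Pp : Submonoid P)
    (hN₀Pp : ∀ u : P, u ∈ N₀ → u ∈ Pp)
    (hconj : ∀ b ∈ Pp, ∀ u ∈ N₀, b * u * b⁻¹ ∈ N₀)
    {M : Type*} [AddCommGroup M] [Module A M]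
    [TopologicalSpace M] [IsTopologicalAddGroup M] [ContinuousSMul A M]
    -- `M` is linearly topologized
    (hlin : (nhds (0 : M)).HasBasis
      (fun S : Submodule A M => IsOpen (S : Set M)) (fun S => (S : Set M)))
    (π : ↥Pp →* Module.End A M)
    (hcont : Continuous fun q : ↥Pp × M => π q.1 q.2)
    (hetale : ∀ b : ↥Pp, IsEtaleAt A N₀ (b : P)
      (fun u : ↥N₀ => π ⟨(u : P), hN₀Pp u u.2⟩) (π b))
    (Ψ : ↥Pp → Module.End A M)
    (hψφ : ∀ b : ↥Pp, Ψ b * π b = 1)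
    (hvanish : ∀ (b : ↥Pp) (u : ↥N₀), u ∉ conjSub N₀ (b : P) →
      ∀ m : M, Ψ b (π ⟨(u : P), hN₀Pp u u.2⟩ (π b m)) = 0)
    (hΨcont : ∀ b : ↥Pp, Continuous (Ψ b))
    (C : Subgroup P) (hCPp : ∀ c ∈ C, c ∈ Pp) (hCcompact : IsCompact (C : Set P)) :
    (nhds (0 : M)).HasBasis
      (fun S : Submodule A M => IsOpen (S : Set M) ∧
        ∀ (c : P) (hc : c ∈ C), ∀ x ∈ S, π ⟨c, hCPp c hc⟩ x ∈ S)
      (fun S => (S : Set M)) := by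
  constructor
  intro U
  constructor
  · intro hU
    -- get an open submodule S₀ ⊆ U
    obtain ⟨S₀, hS₀open, hS₀U⟩ := hlin.mem_iff.mp hU
    -- define the stabilized submodule
    set M' : Submodule A M :=
      { carrier := {x | ∀ c (hc : c ∈ C), π ⟨c, hCPp c hc⟩ x ∈ S₀}
        zero_mem' := by intro c hc; simp
        add_mem' := by
          intro a b ha hb c hc
          rw [map_add]
          exact S₀.add_mem (ha c hc) (hb c hc)
        smul_mem' := by
          intro r a ha c hc
          rw [map_smul]
          exact S₀.smul_mem r (ha c hc) } with hM'def
    have hmem : ∀ x, x ∈ M' ↔ ∀ c (hc : c ∈ C), π ⟨c, hCPp c hc⟩ x ∈ S₀ :=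
      fun x => Iff.rfl
    refine ⟨M', ⟨?_, ?_⟩, ?_⟩
    · -- openness via tube lemma
      -- K = image of C in ↥Pp
      set K : Set ↥Pp := (fun c : C => (⟨(c : P), hCPp c c.2⟩ : ↥Pp)) '' Set.univ with hK
      have hKcomp : IsCompact K := by
        have : IsCompact (Set.univ : Set C) := by
          rw [isCompact_iff_isCompact_univ] at hCcompact
          exact hCcompact
        exact this.image (by continuity)
      have hsub : K ×ˢ ({0} : Set M) ⊆ (fun q : ↥Pp × M => π q.1 q.2) ⁻¹' (S₀ : Set M) := by
        rintro ⟨q, m⟩ ⟨hq, hm⟩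
        simp only [Set.mem_singleton_iff] at hm
        subst hm
        simp only [Set.mem_preimage]
        rw [map_zero]
        exact S₀.zero_mem
      obtain ⟨u, v, hu, hv, hKu, h0v, huv⟩ :=
        generalized_tube_lemma hKcomp isCompact_singleton
          (hS₀open.preimage hcont) hsub
      have hv0 : v ∈ nhds (0 : M) := hv.mem_nhds (h0v rfl)
      obtain ⟨S, hSopen, hSv⟩ := hlin.mem_iff.mp hv0
      have hSM' : (S : Set M) ⊆ (M' : Set M) := by
        intro x hx c hc
        have : ((⟨c, hCPp c hc⟩ : ↥Pp), x) ∈ u ×ˢ v :=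
          ⟨hKu ⟨⟨c, hc⟩, Set.mem_univ _, rfl⟩, hSv hx⟩
        exact huv this
      exact AddSubgroup.isOpen_mono (H₁ := S.toAddSubgroup) (H₂ := M'.toAddSubgroup)
        hSM' hSopen
    · -- stability
      intro c hc x hx c' hc'
      have key : π ⟨c', hCPp c' hc'⟩ (π ⟨c, hCPp c hc⟩ x)
          = π ⟨c' * c, hCPp _ (C.mul_mem hc' hc)⟩ x := by
        have : (⟨c' * c, hCPp _ (C.mul_mem hc' hc)⟩ : ↥Pp)
            = ⟨c', hCPp c' hc'⟩ * ⟨c, hCPp c hc⟩ := rfl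
        rw [this, map_mul]
        rfl
      rw [key]
      exact hx _ (C.mul_mem hc' hc)
    · -- M' ⊆ U
      intro x hx
      have h1 : π ⟨(1 : P), hCPp 1 C.one_mem⟩ x ∈ S₀ := hx 1 C.one_mem
      have : (⟨(1 : P), hCPp 1 C.one_mem⟩ : ↥Pp) = 1 := rfl
      rw [this, map_one] at h1
      exact hS₀U h1
  · rintro ⟨S, ⟨hSopen, _⟩, hSU⟩
    exact Filter.mem_of_superset (hSopen.mem_nhds S.zero_mem) hSU
end
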